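/- arXiv:1106.1791 — 3 statements merged into one kernel-verified Lean document; each statement's English description precedes it below -/
import Mathlib

section
/- Let F be a map assigning to every measure-preserving function f : (X,p) → (Y,q) between finite probability spaces a number F(f) ∈ [0,∞). Suppose F satisfies: (1) Functoriality: F(f ∘ g) = F(f) + F(g) whenever f and g are composable measure-preserving functions; (2) Convex linearity: F(λf ⊕ (1−λ)g) = λF(f) + (1−λ)F(g) for all measure-preserving functions f, g and all λ ∈ [0,1]; (3) Continuity: F(f_n) → F(f) whenever f_n is a sequence of measure-preserving functions converging to f. Then there exists a constant c ≥ 0 such that F(f) = c(H(p) − H(q)) for every measure-preserving function f : (X,p) → (Y,q), where H denotes Shannon entropy. -/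
open scoped BigOperators Classical
open Filter Topology Real

/-- `p` is a probability measure on the finite set `X`. -/
def IsProb {X : Type} [Fintype X] (p : X → ℝ) : Prop :=
  (∀ i, 0 ≤ p i) ∧ ∑ i, p i = 1

/-- `p` is a (nonnegative) measure on the finite set `X`. -/
def IsMeas {X : Type} [Fintype X] (p : X → ℝ) : Prop :=
  ∀ i, 0 ≤ p i

/-- `f` is a measure-preserving function from `(X, p)` to `(Y, q)`. -/
def IsMP {X Y : Type} [Fintype X] [Fintype Y] (p : X → ℝ) (q : Y → ℝ) (f : X → Y) : Prop :=
  ∀ j : Y, q j = ∑ i, if f i = j then p i else 0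

/-- Shannon entropy (with the convention `0 * log 0 = 0`, automatic since `Real.log 0 = 0`). -/
noncomputable def shannon {X : Type} [Fintype X] (p : X → ℝ) : ℝ :=
  -∑ i, p i * Real.log (p i)

/-- The convex combination `λ p ⊕ (1 - λ) q` on the disjoint union. -/
noncomputable def cvx (lam : ℝ) {X Y : Type} (p : X → ℝ) (q : Y → ℝ) : X ⊕ Y → ℝ :=
  Sum.elim (fun i => lam * p i) (fun j => (1 - lam) * q j)

/-- The direct sum `p ⊕ q` on the disjoint union. -/
def dsum {X Y : Type} (p : X → ℝ) (q : Y → ℝ) : X ⊕ Y → ℝ :=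
  Sum.elim p q

/-- Extended Shannon entropy of a measure on a finite set. -/
noncomputable def shannonExt {X : Type} [Fintype X] (p : X → ℝ) : ℝ :=
  if (∑ i, p i) = 0 then 0 else (∑ i, p i) * shannon (fun i => p i / ∑ j, p j)

/-- Tsallis entropy of order `α` of a probability measure. -/
noncomputable def tsallis (α : ℝ) {X : Type} [Fintype X] (p : X → ℝ) : ℝ :=
  if α = 1 then shannon p else (1 / (α - 1)) * (1 - ∑ i, p i ^ α)

/-- Extended Tsallis entropy of order `α` of a measure on a finite set. -/
noncomputable def tsallisExt (α : ℝ) {X : Type} [Fintype X] (p : X → ℝ) : ℝ :=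
  if (∑ i, p i) = 0 then 0 else (∑ i, p i) ^ α * tsallis α (fun i => p i / ∑ j, p j)

namespace BFLaux
def uu : Unit → ℝ := fun _ => 1
lemma isProb_uu : IsProb uu := ⟨fun _ => one_pos.le, by simp [uu]⟩

lemma isMP_toUnit {X : Type} [Fintype X] {p : X → ℝ} (hp : IsProb p) :
    IsMP p uu (fun _ => ()) := by
  intro j
  simp only [uu]
  rw [← hp.2]
  exact (Finset.sum_congr rfl (fun i _ => by simp)).symm

lemma isMP_id {X : Type} [Fintype X] (p : X → ℝ) : IsMP p p (id : X → X) := by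
  intro j
  simp [Finset.sum_ite_eq' Finset.univ j p]

lemma isMP_equiv {X Y : Type} [Fintype X] [Fintype Y] {p : X → ℝ} {q : Y → ℝ} (e : X ≃ Y)
    (h : ∀ x, p x = q (e x)) : IsMP p q e := by
  intro j
  have : ∀ i : X, (if e i = j then p i else 0) = (if i = e.symm j then p i else 0) := by
    intro i
    congr 1
    · simp [Equiv.eq_symm_apply]
  rw [Finset.sum_congr rfl (fun i _ => this i), Finset.sum_ite_eq' Finset.univ (e.symm j) p]
  simp [h (e.symm j)]

lemma isProb_of_equiv {X Y : Type} [Fintype X] [Fintype Y] {p : X → ℝ} {q : Y → ℝ} (e : X ≃ Y)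
    (h : ∀ x, p x = q (e x)) (hq : IsProb q) : IsProb p := by
  constructor
  · intro x; rw [h x]; exact hq.1 _
  · rw [Finset.sum_congr rfl (fun x _ => h x)]
    rw [Equiv.sum_comp e q]
    exact hq.2

lemma isProb_cvx {X Y : Type} [Fintype X] [Fintype Y] {p : X → ℝ} {q : Y → ℝ} {lam : ℝ}
    (h0 : 0 ≤ lam) (h1 : lam ≤ 1) (hp : IsProb p) (hq : IsProb q) : IsProb (cvx lam p q) := by
  constructor
  · rintro (x | y)
    · exact mul_nonneg h0 (hp.1 x)
    · exact mul_nonneg (by linarith) (hq.1 y)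
  · rw [Fintype.sum_sum_type]
    simp only [cvx, Sum.elim_inl, Sum.elim_inr]
    rw [← Finset.mul_sum, ← Finset.mul_sum, hp.2, hq.2]
    ring

lemma isMP_sumMap {X X' Y Y' : Type} [Fintype X] [Fintype X'] [Fintype Y] [Fintype Y']
    {p : X → ℝ} {p' : X' → ℝ} {q : Y → ℝ} {q' : Y' → ℝ} {f : X → X'} {g : Y → Y'} {lam : ℝ}
    (hf : IsMP p p' f) (hg : IsMP q q' g) :
    IsMP (cvx lam p q) (cvx lam p' q') (Sum.map f g) := by
  rintro (j | j) <;>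
    simp only [cvx, Sum.elim_inl, Sum.elim_inr, Fintype.sum_sum_type, Sum.map_inl, Sum.map_inr,
      Sum.inl.injEq, Sum.inr.injEq, reduceCtorEq, if_false, Finset.sum_const_zero, add_zero,
      zero_add]
  · rw [hf j, Finset.mul_sum]
    exact Finset.sum_congr rfl (fun i _ => by split <;> simp
    )
  · rw [hg j, Finset.mul_sum]
    exact Finset.sum_congr rfl (fun i _ => by split <;> simp)


structure BFL where
  F : ∀ {X Y : Type} [Fintype X] [Fintype Y], (X → ℝ) → (Y → ℝ) → (X → Y) → ℝ
  hnn : ∀ {X Y : Type} [Fintype X] [Fintype Y] (p : X → ℝ) (q : Y → ℝ) (f : X → Y),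
      IsProb p → IsProb q → IsMP p q f → 0 ≤ F p q f
  hfunc : ∀ {X Y Z : Type} [Fintype X] [Fintype Y] [Fintype Z]
      (p : X → ℝ) (q : Y → ℝ) (r : Z → ℝ) (g : X → Y) (f : Y → Z),
      IsProb p → IsProb q → IsProb r → IsMP p q g → IsMP q r f →
      F p r (f ∘ g) = F q r f + F p q g
  hcvx : ∀ {X X' Y Y' : Type} [Fintype X] [Fintype X'] [Fintype Y] [Fintype Y']
      (p : X → ℝ) (p' : X' → ℝ) (q : Y → ℝ) (q' : Y' → ℝ) (f : X → X') (g : Y → Y')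
      (lam : ℝ), 0 ≤ lam → lam ≤ 1 →
      IsProb p → IsProb p' → IsProb q → IsProb q' → IsMP p p' f → IsMP q q' g →
      F (cvx lam p q) (cvx lam p' q') (Sum.map f g)
        = lam * F p p' f + (1 - lam) * F q q' g
  hcont : ∀ {X Y : Type} [Fintype X] [Fintype Y]
      (pn : ℕ → X → ℝ) (qn : ℕ → Y → ℝ) (fn : ℕ → X → Y)
      (p : X → ℝ) (q : Y → ℝ) (f : X → Y),
      (∀ n, IsProb (pn n)) → (∀ n, IsProb (qn n)) → (∀ n, IsMP (pn n) (qn n) (fn n)) →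
      IsProb p → IsProb q → IsMP p q f →
      (∀ᶠ n in atTop, fn n = f) →
      (∀ i, Tendsto (fun n => pn n i) atTop (𝓝 (p i))) →
      (∀ j, Tendsto (fun n => qn n j) atTop (𝓝 (q j))) →
      Tendsto (fun n => F (pn n) (qn n) (fn n)) atTop (𝓝 (F p q f))

namespace BFL

variable (T : BFL)

noncomputable def I {X : Type} [Fintype X] (p : X → ℝ) : ℝ := T.F p uu (fun _ => ())

lemma F_id {X : Type} [Fintype X] {p : X → ℝ} (hp : IsProb p) : T.F p p (id : X → X) = 0 := by
  have h := T.hfunc p p p id id hp hp hp (isMP_id p) (isMP_id p)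
  have h2 : (id ∘ id : X → X) = id := rfl
  rw [h2] at h
  linarith

lemma I_nonneg {X : Type} [Fintype X] {p : X → ℝ} (hp : IsProb p) : 0 ≤ T.I p :=
  T.hnn p uu _ hp isProb_uu (isMP_toUnit hp)

lemma I_split {X Y : Type} [Fintype X] [Fintype Y] {p : X → ℝ} {q : Y → ℝ} {f : X → Y}
    (hp : IsProb p) (hq : IsProb q) (hf : IsMP p q f) :
    T.I p = T.I q + T.F p q f := by
  have h := T.hfunc p q uu f (fun _ => ()) hp hq isProb_uu hf (isMP_toUnit hq)
  exact h

lemma F_retract {X Y : Type} [Fintype X] [Fintype Y] {p : X → ℝ} {q : Y → ℝ} {f : X → Y}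
    {g : Y → X} (hp : IsProb p) (hq : IsProb q) (hf : IsMP p q f) (hg : IsMP q p g)
    (h : ∀ y, f (g y) = y) : T.F p q f = 0 := by
  have h1 := T.hfunc q p q g f hq hp hq hg hf
  have h2 : (f ∘ g : Y → Y) = id := funext h
  rw [h2, T.F_id hq] at h1
  have h3 := T.hnn p q f hp hq hf
  have h4 := T.hnn q p g hq hp hg
  linarith

lemma I_retract {X Y : Type} [Fintype X] [Fintype Y] {p : X → ℝ} {q : Y → ℝ} {f : X → Y}
    {g : Y → X} (hp : IsProb p) (hq : IsProb q) (hf : IsMP p q f) (hg : IsMP q p g)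
    (h : ∀ y, f (g y) = y) : T.I p = T.I q := by
  rw [T.I_split hp hq hf, T.F_retract hp hq hf hg h, add_zero]

lemma I_congr {X Y : Type} [Fintype X] [Fintype Y] {p : X → ℝ} {q : Y → ℝ} (e : X ≃ Y)
    (h : ∀ x, p x = q (e x)) (hq : IsProb q) : T.I p = T.I q := by
  have hp : IsProb p := isProb_of_equiv e h hq
  refine T.I_retract hp hq (isMP_equiv e h) (isMP_equiv e.symm ?_) (fun y => e.apply_symm_apply y)
  intro y
  rw [h (e.symm y), e.apply_symm_apply]

noncomputable def phi (lam : ℝ) : ℝ := T.I (cvx lam uu uu)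

lemma grouping {X Y : Type} [Fintype X] [Fintype Y] {p : X → ℝ} {q : Y → ℝ} {lam : ℝ}
    (h0 : 0 ≤ lam) (h1 : lam ≤ 1) (hp : IsProb p) (hq : IsProb q) :
    T.I (cvx lam p q) = T.phi lam + lam * T.I p + (1 - lam) * T.I q := by
  have hcu : IsProb (cvx lam uu uu) := isProb_cvx h0 h1 isProb_uu isProb_uu
  have hcpq : IsProb (cvx lam p q) := isProb_cvx h0 h1 hp hq
  have hmap : IsMP (cvx lam p q) (cvx lam uu uu)
      (Sum.map (fun _ => ()) (fun _ => ())) :=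
    isMP_sumMap (isMP_toUnit hp) (isMP_toUnit hq)
  have h2 := T.hcvx p uu q uu (fun _ => ()) (fun _ => ()) lam h0 h1 hp isProb_uu hq isProb_uu
    (isMP_toUnit hp) (isMP_toUnit hq)
  have h3 := T.hfunc (cvx lam p q) (cvx lam uu uu) uu
    (Sum.map (fun _ => ()) (fun _ => ())) (fun _ => ()) hcpq hcu isProb_uu hmap
    (isMP_toUnit hcu)
  have h4 : ((fun _ => ()) ∘ Sum.map (fun _ => ()) (fun _ => ()) :
      X ⊕ Y → Unit) = (fun _ => ()) := rfl
  rw [h4] at h3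
  show T.F (cvx lam p q) uu (fun _ => ()) = _
  rw [h3, h2]
  simp only [phi, I]
  ring

lemma phi_nonneg {lam : ℝ} (h0 : 0 ≤ lam) (h1 : lam ≤ 1) : 0 ≤ T.phi lam :=
  T.I_nonneg (isProb_cvx h0 h1 isProb_uu isProb_uu)

lemma I_uu : T.I uu = 0 := by
  have := T.F_id (p := uu) isProb_uu
  have h : (id : Unit → Unit) = (fun _ => ()) := rfl
  rw [h] at this
  exact this

lemma phi_zero : T.phi 0 = 0 := by
  have hc : IsProb (cvx (0:ℝ) uu uu) := isProb_cvx le_rfl zero_le_one isProb_uu isProb_uu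
  have hg : IsMP uu (cvx (0:ℝ) uu uu) (fun _ => (Sum.inr () : Unit ⊕ Unit)) := by
    rintro (j | j) <;> simp [cvx, uu]
  have := T.I_retract hc isProb_uu (isMP_toUnit hc) hg (fun y => rfl)
  rw [phi, this, T.I_uu]

lemma phi_one : T.phi 1 = 0 := by
  have hc : IsProb (cvx (1:ℝ) uu uu) := isProb_cvx zero_le_one le_rfl isProb_uu isProb_uu
  have hg : IsMP uu (cvx (1:ℝ) uu uu) (fun _ => (Sum.inl () : Unit ⊕ Unit)) := by
    rintro (j | j) <;> simp [cvx, uu]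
  have := T.I_retract hc isProb_uu (isMP_toUnit hc) hg (fun y => rfl)
  rw [phi, this, T.I_uu]


noncomputable def fu (n : ℕ) : ℝ := T.I (fun _ : Fin n => ((n : ℝ))⁻¹)

lemma isProb_unif {n : ℕ} (hn : 1 ≤ n) : IsProb (fun _ : Fin n => ((n : ℝ))⁻¹) := by
  have hn' : (0:ℝ) < n := by exact_mod_cast hn
  constructor
  · intro i; positivity
  · simp [Finset.sum_const, Finset.card_univ]
    field_simp

lemma fu_nonneg {n : ℕ} (hn : 1 ≤ n) : 0 ≤ T.fu n := T.I_nonneg (isProb_unif hn)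

lemma fu_one : T.fu 1 = 0 := by
  rw [fu]
  have h1 : IsProb (fun _ : Fin 1 => (((1:ℕ):ℝ))⁻¹) := isProb_unif le_rfl
  have hg : IsMP uu (fun _ : Fin 1 => (((1:ℕ):ℝ))⁻¹) (fun _ => (0 : Fin 1)) := by
    intro j
    have : j = 0 := Subsingleton.elim _ _
    simp [this, uu]
  rw [T.I_retract h1 isProb_uu (isMP_toUnit h1) hg (fun y => rfl), T.I_uu]

lemma grouping_uniform {m n : ℕ} (hm : 1 ≤ m) (hn : 1 ≤ n) :
    T.fu (m + n) = T.phi ((m:ℝ)/((m:ℝ)+(n:ℝ))) + ((m:ℝ)/((m:ℝ)+(n:ℝ))) * T.fu m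
      + ((n:ℝ)/((m:ℝ)+(n:ℝ))) * T.fu n := by
  have hm' : (0:ℝ) < m := by exact_mod_cast hm
  have hn' : (0:ℝ) < n := by exact_mod_cast hn
  have hmn : (0:ℝ) < (m:ℝ) + n := by linarith
  set lam : ℝ := (m:ℝ)/((m:ℝ)+(n:ℝ)) with hlam
  have h0 : 0 ≤ lam := by positivity
  have h1 : lam ≤ 1 := by rw [hlam, div_le_one hmn]; linarith
  have hval : ∀ x : Fin m ⊕ Fin n,
      cvx lam (fun _ : Fin m => ((m:ℝ))⁻¹) (fun _ : Fin n => ((n:ℝ))⁻¹) x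
        = (fun _ : Fin (m+n) => ((m:ℝ)+(n:ℝ))⁻¹) (finSumFinEquiv x) := by
    rintro (x | x) <;>
      · simp only [cvx, Sum.elim_inl, Sum.elim_inr, hlam]
        field_simp
        try ring
  have hqprob : IsProb (fun _ : Fin (m+n) => ((m:ℝ)+(n:ℝ))⁻¹) := by
    have := isProb_unif (n := m + n) (by omega)
    push_cast at this
    exact this
  have heq := T.I_congr finSumFinEquiv hval hqprob
  have hgrp := T.grouping (p := fun _ : Fin m => ((m:ℝ))⁻¹) (q := fun _ : Fin n => ((n:ℝ))⁻¹)
    h0 h1 (isProb_unif hm) (isProb_unif hn)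
  have h2 : (1 : ℝ) - lam = (n:ℝ)/((m:ℝ)+(n:ℝ)) := by
    rw [hlam]; field_simp; ring
  rw [← h2]
  have hcast : T.fu (m+n) = T.I (fun _ : Fin (m+n) => ((m:ℝ)+(n:ℝ))⁻¹) := by
    rw [fu]
    congr 1
    push_cast
    rfl
  rw [hcast, ← heq, hgrp]
  rfl

lemma fu_mul {m n : ℕ} (hm : 1 ≤ m) (hn : 1 ≤ n) : T.fu (m * n) = T.fu m + T.fu n := by
  induction m with
  | zero => omega
  | succ m ih =>
    rcases Nat.eq_or_lt_of_le hm with h | h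
    · simp [← h, T.fu_one]
    · have hm1 : 1 ≤ m := by omega
      have ihm := ih hm1
      have hmn : 1 ≤ m * n := Nat.one_le_iff_ne_zero.2 (by positivity)
      have hG1 := T.grouping_uniform (m := m * n) (n := n) hmn hn
      have hG2 := T.grouping_uniform (m := m) (n := 1) hm1 le_rfl
      have hmR : (0:ℝ) < m := by exact_mod_cast hm1
      have hnR : (0:ℝ) < n := by exact_mod_cast hn
      have e1 : ((m * n : ℕ) : ℝ) / (((m * n : ℕ) : ℝ) + (n:ℝ)) = (m:ℝ)/((m:ℝ)+1) := by
        push_cast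
        rw [div_eq_div_iff (by positivity) (by positivity)]
        ring
      have e2 : (n:ℝ) / (((m * n : ℕ) : ℝ) + (n:ℝ)) = 1/((m:ℝ)+1) := by
        push_cast
        rw [div_eq_div_iff (by positivity) (by positivity)]
        ring
      rw [e1, e2, ihm] at hG1
      push_cast at hG2
      rw [T.fu_one] at hG2
      have hgoal : (m+1) * n = m * n + n := by ring
      rw [hgoal, hG1, hG2]
      have hsum : (m:ℝ)/((m:ℝ)+1) + 1/((m:ℝ)+1) = 1 := by field_simp
      linear_combination T.fu n * hsum


lemma phi_tendsto {lamn : ℕ → ℝ} {lam : ℝ} (h0 : ∀ n, 0 ≤ lamn n) (h1 : ∀ n, lamn n ≤ 1)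
    (g0 : 0 ≤ lam) (g1 : lam ≤ 1) (hl : Tendsto lamn atTop (𝓝 lam)) :
    Tendsto (fun n => T.phi (lamn n)) atTop (𝓝 (T.phi lam)) := by
  have := T.hcont (fun n => cvx (lamn n) uu uu) (fun _ => uu) (fun _ => (fun _ => ()))
    (cvx lam uu uu) uu (fun _ => ())
    (fun n => isProb_cvx (h0 n) (h1 n) isProb_uu isProb_uu)
    (fun _ => isProb_uu)
    (fun n => isMP_toUnit (isProb_cvx (h0 n) (h1 n) isProb_uu isProb_uu))
    (isProb_cvx g0 g1 isProb_uu isProb_uu) isProb_uu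
    (isMP_toUnit (isProb_cvx g0 g1 isProb_uu isProb_uu))
    (Eventually.of_forall fun _ => rfl)
    (by
      rintro (i | i)
      · simp only [cvx, Sum.elim_inl, uu, mul_one]
        exact hl
      · simp only [cvx, Sum.elim_inr, uu, mul_one]
        exact tendsto_const_nhds.sub hl)
    (fun _ => tendsto_const_nhds)
  exact this

lemma fu_succ {n : ℕ} (hn : 1 ≤ n) :
    T.fu (n+1) = T.phi (((n:ℝ)+1)⁻¹) + ((n:ℝ)/((n:ℝ)+1)) * T.fu n := by
  have h := T.grouping_uniform (m := 1) (n := n) le_rfl hn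
  rw [T.fu_one] at h
  have e : (1 : ℕ) + n = n + 1 := by omega
  rw [e] at h
  push_cast at h
  have e2 : (1:ℝ) + (n:ℝ) = (n:ℝ) + 1 := by ring
  rw [e2] at h
  rw [h, one_div]
  ring

lemma nfu_eq_sum (n : ℕ) :
    (n:ℝ) * T.fu n = ∑ k ∈ Finset.range (n+1), (k:ℝ) * T.phi (((k:ℝ))⁻¹) := by
  induction n with
  | zero => simp
  | succ n ih =>
    rw [Finset.sum_range_succ, ← ih]
    rcases Nat.eq_zero_or_pos n with h | h
    · subst h
      simp [T.fu_one, T.phi_one]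
    · rw [T.fu_succ h]
      have hn0 : ((n:ℝ)+1) ≠ 0 := by positivity
      push_cast
      field_simp
      ring

lemma weighted_cesaro {ψ : ℕ → ℝ} (h0 : ∀ k, 0 ≤ ψ k) (h : Tendsto ψ atTop (𝓝 0)) :
    Tendsto (fun n : ℕ => (∑ k ∈ Finset.range (n+1), (k:ℝ) * ψ k) / (n:ℝ)^2) atTop (𝓝 0) := by
  have hces : Tendsto (fun m : ℕ => (m:ℝ)⁻¹ • ∑ i ∈ Finset.range m, ψ i) atTop (𝓝 0) := h.cesaro
  have hces' : Tendsto (fun n : ℕ => (((n:ℕ)+1 : ℕ):ℝ)⁻¹ * ∑ i ∈ Finset.range (n+1), ψ i)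
      atTop (𝓝 0) := by
    exact Tendsto.congr (fun n => by simp [Function.comp, smul_eq_mul])
      (hces.comp (tendsto_add_atTop_nat 1))
  have hrat : Tendsto (fun n : ℕ => ((n:ℝ)+1) / (n:ℝ)) atTop (𝓝 1) := by
    have h1 : Tendsto (fun n : ℕ => 1 + 1/(n:ℝ)) atTop (𝓝 1) := by
      have := tendsto_one_div_atTop_nhds_zero_nat (𝕜 := ℝ)
      simpa using tendsto_const_nhds.add this
    apply h1.congr'
    filter_upwards [eventually_ge_atTop 1] with n hn
    have hn0 : (n:ℝ) ≠ 0 := by positivity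
    field_simp
  have hg : Tendsto (fun n : ℕ => (((n:ℝ)+1)/(n:ℝ)) *
      ((((n:ℕ)+1 : ℕ):ℝ)⁻¹ * ∑ i ∈ Finset.range (n+1), ψ i)) atTop (𝓝 0) := by
    simpa using hrat.mul hces'
  refine squeeze_zero' ?_ ?_ hg
  · filter_upwards with n
    apply div_nonneg _ (by positivity)
    exact Finset.sum_nonneg fun k _ => mul_nonneg (by positivity) (h0 k)
  · filter_upwards [eventually_ge_atTop 1] with n hn
    have hn0 : (0:ℝ) < (n:ℝ) := by exact_mod_cast hn
    have hS : (∑ k ∈ Finset.range (n+1), (k:ℝ) * ψ k) ≤ (n:ℝ) * ∑ k ∈ Finset.range (n+1), ψ k := by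
      rw [Finset.mul_sum]
      apply Finset.sum_le_sum
      intro k hk
      have hk' : (k:ℝ) ≤ (n:ℝ) := by
        have := Finset.mem_range.1 hk
        exact_mod_cast Nat.lt_succ_iff.1 this
      exact mul_le_mul_of_nonneg_right hk' (h0 k)
    have heq : (((n:ℝ)+1)/(n:ℝ)) * ((((n:ℕ)+1 : ℕ):ℝ)⁻¹ * ∑ i ∈ Finset.range (n+1), ψ i)
        = (∑ i ∈ Finset.range (n+1), ψ i) / (n:ℝ) := by
      push_cast
      field_simp
    rw [heq]
    rw [div_le_div_iff₀ (by positivity) hn0]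
    calc (∑ k ∈ Finset.range (n+1), (k:ℝ) * ψ k) * (n:ℝ)
        ≤ ((n:ℝ) * ∑ k ∈ Finset.range (n+1), ψ k) * (n:ℝ) :=
          mul_le_mul_of_nonneg_right hS hn0.le
      _ = (∑ i ∈ Finset.range (n+1), ψ i) * (n:ℝ)^2 := by ring

lemma phi_inv_tendsto : Tendsto (fun k : ℕ => T.phi ((k:ℝ)⁻¹)) atTop (𝓝 0) := by
  have h := T.phi_tendsto (lamn := fun k : ℕ => ((k:ℝ))⁻¹) (lam := 0)
    (fun k => by positivity)
    (fun k => by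
      rcases Nat.eq_zero_or_pos k with h | h
      · simp [h]
      · have : (1:ℝ) ≤ k := by exact_mod_cast h
        rw [inv_le_one_iff₀]
        right; exact this)
    le_rfl zero_le_one
    (by
      have := tendsto_one_div_atTop_nhds_zero_nat (𝕜 := ℝ)
      simpa [one_div] using this)
  simpa [T.phi_zero] using h

lemma fu_div_tendsto : Tendsto (fun n : ℕ => T.fu n / (n:ℝ)) atTop (𝓝 0) := by
  have hw := weighted_cesaro (ψ := fun k => T.phi ((k:ℝ)⁻¹))
    (fun k => T.phi_nonneg (by positivity) (by
      rcases Nat.eq_zero_or_pos k with h | h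
      · simp [h]
      · have : (1:ℝ) ≤ k := by exact_mod_cast h
        rw [inv_le_one_iff₀]
        right; exact this)) T.phi_inv_tendsto
  apply hw.congr'
  filter_upwards [eventually_ge_atTop 1] with n hn
  have hn0 : ((n:ℝ)) ≠ 0 := by positivity
  rw [← T.nfu_eq_sum n, sq, mul_div_mul_left _ _ hn0]

lemma fu_div_succ_tendsto : Tendsto (fun a : ℕ => T.fu a / ((a:ℝ)+1)) atTop (𝓝 0) := by
  apply squeeze_zero'
  · filter_upwards [eventually_ge_atTop 1] with a ha
    exact div_nonneg (T.fu_nonneg ha) (by positivity)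
  · filter_upwards [eventually_ge_atTop 1] with a ha
    have ha0 : (0:ℝ) < (a:ℝ) := by exact_mod_cast ha
    apply div_le_div_of_nonneg_left (T.fu_nonneg ha) ha0
    linarith
  · exact T.fu_div_tendsto

lemma e_tendsto : Tendsto (fun a : ℕ => T.fu (a+1) - T.fu a) atTop (𝓝 0) := by
  have h1 : Tendsto (fun a : ℕ => T.phi (((a:ℝ)+1)⁻¹)) atTop (𝓝 0) := by
    have h := T.phi_tendsto (lamn := fun a : ℕ => (((a:ℝ)+1))⁻¹) (lam := 0)
      (fun a => by positivity)
      (fun a => by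
        rw [inv_le_one_iff₀]; right
        have : (0:ℝ) ≤ (a:ℝ) := by positivity
        linarith)
      le_rfl zero_le_one
      (by
        have := tendsto_one_div_add_atTop_nhds_zero_nat (𝕜 := ℝ)
        simpa [one_div] using this)
    simpa [T.phi_zero] using h
  have h2 := h1.sub T.fu_div_succ_tendsto
  rw [sub_zero] at h2
  apply h2.congr'
  filter_upwards [eventually_ge_atTop 1] with a ha
  rw [T.fu_succ ha]
  have ha0 : ((a:ℝ)+1) ≠ 0 := by positivity
  field_simp
  ring


lemma phi_half : T.phi (1/2 : ℝ) = T.fu 2 := by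
  have e : Unit ⊕ Unit ≃ Fin 2 :=
    { toFun := Sum.elim (fun _ => 0) (fun _ => 1)
      invFun := fun j => if j = 0 then Sum.inl () else Sum.inr ()
      left_inv := by rintro (⟨⟩ | ⟨⟩) <;> simp
      right_inv := by decide }
  have h : ∀ x : Unit ⊕ Unit, cvx (1/2 : ℝ) uu uu x = (fun _ : Fin 2 => (((2:ℕ)):ℝ)⁻¹) (e x) := by
    rintro (⟨⟩ | ⟨⟩) <;> norm_num [cvx, uu]
  exact T.I_congr e h (isProb_unif (by norm_num))

lemma lam_half_tendsto : Tendsto (fun a : ℕ => (a:ℝ)/(2*(a:ℝ)+1)) atTop (𝓝 (1/2 : ℝ)) := by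
  have t1 : Tendsto (fun a : ℕ => ((2*a+1 : ℕ):ℝ)⁻¹) atTop (𝓝 0) :=
    tendsto_inv_atTop_nhds_zero_nat.comp
      (tendsto_atTop_atTop.2 fun b => ⟨b, fun n hn => by omega⟩)
  have t2 : Tendsto (fun a : ℕ => 1/2 - (1/2) * ((2*a+1 : ℕ):ℝ)⁻¹) atTop (𝓝 (1/2 : ℝ)) := by
    have h2 := (tendsto_const_nhds (x := (1/2:ℝ)) (f := atTop (α := ℕ))).sub
      ((tendsto_const_nhds (x := (1/2:ℝ)) (f := atTop (α := ℕ))).mul t1)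
    simpa using h2
  apply t2.congr
  intro a
  have h0 : ((2*a+1 : ℕ):ℝ) ≠ 0 := by positivity
  push_cast at h0 ⊢
  field_simp
  ring

lemma D_tendsto : Tendsto (fun N : ℕ => T.fu N - T.fu (N/2)) atTop (𝓝 (T.fu 2)) := by
  set ρ : ℕ → ℝ := fun a => |T.phi ((a:ℝ)/(2*(a:ℝ)+1)) - T.fu 2| + |T.fu (a+1) - T.fu a| with hρdef
  have hρ : Tendsto ρ atTop (𝓝 0) := by
    have hphi : Tendsto (fun a : ℕ => T.phi ((a:ℝ)/(2*(a:ℝ)+1))) atTop (𝓝 (T.fu 2)) := by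
      have := T.phi_tendsto (lamn := fun a : ℕ => (a:ℝ)/(2*(a:ℝ)+1)) (lam := (1/2:ℝ))
        (fun a => by positivity)
        (fun a => by
          rw [div_le_one (by positivity)]
          have : (0:ℝ) ≤ (a:ℝ) := by positivity
          linarith)
        (by norm_num) (by norm_num) lam_half_tendsto
      rwa [T.phi_half] at this
    have h1 : Tendsto (fun a : ℕ => |T.phi ((a:ℝ)/(2*(a:ℝ)+1)) - T.fu 2|) atTop (𝓝 0) := by
      have := (hphi.sub (tendsto_const_nhds (x := T.fu 2))).abs
      simpa using this
    have h2 : Tendsto (fun a : ℕ => |T.fu (a+1) - T.fu a|) atTop (𝓝 0) := by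
      have := T.e_tendsto.abs
      simpa using this
    have := h1.add h2
    simpa using this
  have hdiv : Tendsto (fun N : ℕ => N / 2) atTop atTop := by
    apply tendsto_atTop_atTop.2
    intro b
    exact ⟨2 * b, fun n hn => by omega⟩
  have hbound : ∀ N, 2 ≤ N → |(T.fu N - T.fu (N/2)) - T.fu 2| ≤ ρ (N/2) := by
    intro N hN
    set a := N / 2 with ha
    have ha1 : 1 ≤ a := by omega
    rcases Nat.mod_two_eq_zero_or_one N with h | h
    · have hNa : N = 2 * a := by omega
      have : T.fu N = T.fu 2 + T.fu a := by
        rw [hNa]; exact T.fu_mul (by norm_num) ha1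
      rw [this]
      simp only [hρdef]
      have : T.fu 2 + T.fu a - T.fu a - T.fu 2 = 0 := by ring
      rw [this, abs_zero]
      positivity
    · have hNa : N = a + (a + 1) := by omega
      have hG := T.grouping_uniform (m := a) (n := a + 1) ha1 (by omega)
      rw [← hNa] at hG
      have hc : ((a:ℝ))/(2*(a:ℝ)+1) + ((a:ℝ)+1)/(2*(a:ℝ)+1) = 1 := by
        field_simp
        ring
      have hcast1 : ((a:ℝ)) + ((a+1 : ℕ):ℝ) = 2*(a:ℝ)+1 := by push_cast; ring
      rw [hcast1] at hG
      push_cast at hG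
      have key : T.fu N - T.fu a - T.fu 2
          = (T.phi ((a:ℝ)/(2*(a:ℝ)+1)) - T.fu 2)
            + (((a:ℝ)+1)/(2*(a:ℝ)+1)) * (T.fu (a+1) - T.fu a) := by
        linear_combination hG + T.fu a * hc
      rw [key]
      calc |(T.phi ((a:ℝ)/(2*(a:ℝ)+1)) - T.fu 2)
            + (((a:ℝ)+1)/(2*(a:ℝ)+1)) * (T.fu (a+1) - T.fu a)|
          ≤ |T.phi ((a:ℝ)/(2*(a:ℝ)+1)) - T.fu 2|
            + |(((a:ℝ)+1)/(2*(a:ℝ)+1)) * (T.fu (a+1) - T.fu a)| := abs_add_le _ _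
        _ ≤ |T.phi ((a:ℝ)/(2*(a:ℝ)+1)) - T.fu 2| + |T.fu (a+1) - T.fu a| := by
            rw [abs_mul]
            have h1 : |((a:ℝ)+1)/(2*(a:ℝ)+1)| ≤ 1 := by
              rw [abs_of_nonneg (by positivity), div_le_one (by positivity)]
              have : (0:ℝ) ≤ (a:ℝ) := by positivity
              linarith
            have := mul_le_mul_of_nonneg_right h1 (abs_nonneg (T.fu (a+1) - T.fu a))
            linarith
        _ = ρ a := rfl
  rw [tendsto_iff_dist_tendsto_zero]
  refine squeeze_zero' ?_ ?_ (Tendsto.congr (fun _ => rfl) (hρ.comp hdiv))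
  · filter_upwards with N
    exact dist_nonneg
  · filter_upwards [eventually_ge_atTop 2] with N hN
    rw [Real.dist_eq]
    exact hbound N hN


lemma I_one : T.I (fun _ : Fin 1 => (1:ℝ)) = 0 := by
  have h : (fun _ : Fin 1 => (1:ℝ)) = (fun _ : Fin 1 => (((1:ℕ)):ℝ)⁻¹) := by norm_num
  rw [h]
  exact T.fu_one

lemma isProb_one : IsProb (fun _ : Fin 1 => (1:ℝ)) := by
  constructor
  · intro i; norm_num
  · simp

lemma isProb_ratio {m : ℕ} (k : Fin (m+1) → ℕ) (hk : ∀ i, 1 ≤ k i) :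
    IsProb (fun i => (k i : ℝ) / ((∑ j, k j : ℕ) : ℝ)) := by
  have hpos : 0 < ∑ j, k j :=
    lt_of_lt_of_le (hk 0) (Finset.single_le_sum (fun i _ => Nat.zero_le _) (Finset.mem_univ 0))
  constructor
  · intro i; positivity
  · rw [← Finset.sum_div]
    rw [show (∑ i, ((k i:ℝ))) = ((∑ j, k j : ℕ):ℝ) from by push_cast; rfl]
    apply div_self
    have : (0:ℝ) < ((∑ j, k j : ℕ):ℝ) := by exact_mod_cast hpos
    linarith

lemma grouping_rational : ∀ (n : ℕ) (k : Fin (n+1) → ℕ), (∀ i, 1 ≤ k i) →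
    T.I (fun i => (k i : ℝ) / ((∑ j, k j : ℕ) : ℝ))
      = T.fu (∑ j, k j) - ∑ i, ((k i : ℝ) / ((∑ j, k j : ℕ) : ℝ)) * T.fu (k i) := by
  intro n
  induction n with
  | zero =>
    intro k hk
    have hsum : (∑ j, k j) = k 0 := by simp [Fin.sum_univ_one]
    have hk0 : (0:ℝ) < (k 0 : ℝ) := by exact_mod_cast hk 0
    have hp : (fun i : Fin 1 => (k i : ℝ) / ((∑ j, k j : ℕ) : ℝ)) = (fun _ : Fin 1 => (1:ℝ)) := by
      funext i
      have : i = 0 := Subsingleton.elim _ _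
      rw [this, hsum]
      field_simp
    rw [hp, T.I_one, hsum, Fin.sum_univ_one]
    rw [div_self (ne_of_gt hk0)]
    ring
  | succ n ih =>
    intro k hk
    set k' : Fin (n+1) → ℕ := fun i => k i.castSucc with hk'def
    set M : ℕ := ∑ j, k' j with hMdef
    set K : ℕ := k (Fin.last (n+1)) with hKdef
    have hNsum : (∑ j, k j) = M + K := by
      rw [hMdef, hKdef, hk'def]
      exact Fin.sum_univ_castSucc k
    set N : ℕ := M + K with hNdef
    have hM1 : 1 ≤ M := by
      calc 1 ≤ k' 0 := hk _
        _ ≤ M := Finset.single_le_sum (f := k') (fun i _ => Nat.zero_le _) (Finset.mem_univ 0)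
    have hK1 : 1 ≤ K := hk _
    have hMR : (0:ℝ) < (M:ℝ) := by exact_mod_cast hM1
    have hKR : (0:ℝ) < (K:ℝ) := by exact_mod_cast hK1
    have hNR : (0:ℝ) < (N:ℝ) := by
      have : 1 ≤ N := by omega
      exact_mod_cast this
    set lam : ℝ := (M:ℝ)/(N:ℝ) with hlamdef
    have hlam0 : 0 ≤ lam := by positivity
    have hlam1 : lam ≤ 1 := by
      rw [hlamdef, div_le_one hNR]
      have : (M:ℕ) ≤ N := by omega
      exact_mod_cast this
    set p' : Fin (n+1) → ℝ := fun i => (k' i : ℝ) / ((∑ j, k' j : ℕ) : ℝ) with hp'def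
    have hp'prob : IsProb p' := isProb_ratio k' (fun i => hk _)
    have hqprob : IsProb (fun i : Fin (n+1+1) => (k i : ℝ) / ((∑ j, k j : ℕ) : ℝ)) :=
      isProb_ratio k hk
    have hval : ∀ x : Fin (n+1) ⊕ Fin 1,
        cvx lam p' (fun _ : Fin 1 => (1:ℝ)) x
          = (fun i : Fin (n+1+1) => (k i : ℝ) / ((∑ j, k j : ℕ) : ℝ))
            (finSumFinEquiv (m := n+1) (n := 1) x) := by
      rintro (i | j)
      · simp only [cvx, Sum.elim_inl]
        have he : (finSumFinEquiv (m := n+1) (n := 1) (Sum.inl i)) = i.castSucc := by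
          rw [finSumFinEquiv_apply_left]
          rfl
        rw [he]
        simp only [hlamdef, hp'def]
        rw [hNsum, ← hMdef]
        rw [show k i.castSucc = k' i from rfl]
        have h1 : (M:ℝ) ≠ 0 := ne_of_gt hMR
        have h2 : (N:ℝ) ≠ 0 := ne_of_gt hNR
        field_simp
      · simp only [cvx, Sum.elim_inr]
        have hj : j = 0 := Subsingleton.elim _ _
        have he : (finSumFinEquiv (m := n+1) (n := 1) (Sum.inr j)) = Fin.last (n+1) := by
          rw [finSumFinEquiv_apply_right, hj]
          rfl
        rw [he]
        simp only [hlamdef]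
        have hcN : ((N:ℕ):ℝ) = (M:ℝ) + (K:ℝ) := by rw [hNdef]; push_cast; ring
        rw [hNsum, mul_one, hcN]
        have h0 : (M:ℝ) + (K:ℝ) ≠ 0 := by linarith
        field_simp
        rw [← hKdef]; ring
    have heq := T.I_congr (finSumFinEquiv (m := n+1) (n := 1)) hval hqprob
    have hgrp := T.grouping (lam := lam) hlam0 hlam1 hp'prob isProb_one
    have hG := T.grouping_uniform (m := M) (n := K) hM1 hK1
    have hih := ih k' (fun i => hk _)
    -- assemble
    rw [← heq, hgrp, T.I_one, hih, hNsum, ← hMdef]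
    have hcastN : ((N:ℕ):ℝ) = (M:ℝ) + (K:ℝ) := by rw [hNdef]; push_cast; ring
    have hphi : T.phi lam = T.fu N - lam * T.fu M - ((K:ℝ)/(N:ℝ)) * T.fu K := by
      rw [hlamdef]
      rw [show (M:ℝ)/(N:ℝ) = (M:ℝ)/((M:ℝ)+(K:ℝ)) by rw [hcastN]]
      rw [show (K:ℝ)/(N:ℝ) = (K:ℝ)/((M:ℝ)+(K:ℝ)) by rw [hcastN]]
      rw [show T.fu N = T.fu (M+K) by rw [hNdef]]
      rw [hG]
      ring
    rw [hphi]
    have hsplit : (∑ i : Fin (n+1+1), ((k i : ℝ) / ((N:ℕ):ℝ)) * T.fu (k i))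
        = (∑ i : Fin (n+1), ((k' i : ℝ) / ((N:ℕ):ℝ)) * T.fu (k' i)) + ((K:ℝ)/((N:ℕ):ℝ)) * T.fu K := by
      rw [Fin.sum_univ_castSucc (f := fun i : Fin (n+1+1) => ((k i : ℝ) / ((N:ℕ):ℝ)) * T.fu (k i))]
    rw [hsplit]
    have hpull : lam * (T.fu M - ∑ i : Fin (n+1), ((k' i : ℝ) / ((M:ℕ) : ℝ)) * T.fu (k' i))
        = lam * T.fu M - ∑ i : Fin (n+1), ((k' i : ℝ) / ((N:ℕ):ℝ)) * T.fu (k' i) := by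
      rw [mul_sub]
      congr 1
      rw [Finset.mul_sum]
      apply Finset.sum_congr rfl
      intro i _
      rw [hlamdef]
      have h1 : (M:ℝ) ≠ 0 := ne_of_gt hMR
      have h2 : (N:ℝ) ≠ 0 := ne_of_gt hNR
      field_simp
    rw [hpull]
    ring

end BFL

lemma tendsto_half : Tendsto (fun N : ℕ => N / 2) atTop atTop :=
  tendsto_atTop_atTop.2 fun b => ⟨2 * b, fun n hn => by omega⟩

lemma tele {g : ℕ → ℝ} (h : Tendsto (fun N => g N - g (N/2)) atTop (𝓝 0)) :
    Tendsto (fun N : ℕ => g N / Real.log N) atTop (𝓝 0) := by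
  rw [Metric.tendsto_atTop]
  intro ε hε
  have hlog2 : (0:ℝ) < Real.log 2 := Real.log_pos (by norm_num)
  set δ := ε * Real.log 2 / 8 with hδdef
  have hδ : 0 < δ := by positivity
  obtain ⟨K₀, hK₀⟩ := (Metric.tendsto_atTop.1 h) δ hδ
  set K := max K₀ 2 with hKdef
  have hK2 : 2 ≤ K := le_max_right _ _
  have hne : (Finset.range K).Nonempty := ⟨0, Finset.mem_range.2 (by omega)⟩
  set C := (Finset.range K).sup' hne (fun N => |g N|) with hCdef
  have hCb : ∀ N, N < K → |g N| ≤ C := fun N hN =>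
    Finset.le_sup' (f := fun N => |g N|) (Finset.mem_range.2 hN)
  have hC0 : 0 ≤ C := le_trans (abs_nonneg (g 0)) (hCb 0 (by omega))
  have key : ∀ N, |g N| ≤ C + δ * ((Nat.log 2 N : ℝ) + 1) := by
    intro N
    induction N using Nat.strong_induction_on with
    | _ N ih =>
      by_cases hN : N < K
      · have h1 := hCb N hN
        have h2 : (0:ℝ) ≤ (Nat.log 2 N : ℝ) + 1 := by positivity
        nlinarith
      · push_neg at hN
        have hN2 : 2 ≤ N := le_trans hK2 hN
        have hstep : |g N - g (N/2)| ≤ δ := by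
          have := hK₀ N (le_trans (le_max_left _ _) hN)
          rw [Real.dist_eq, sub_zero] at this
          exact this.le
        have hlt : N / 2 < N := Nat.div_lt_self (by omega) (by norm_num)
        have ih2 := ih (N/2) hlt
        have hlogN : 1 ≤ Nat.log 2 N := Nat.log_pos (by norm_num) hN2
        have hlog : (Nat.log 2 (N/2) : ℝ) + 1 = (Nat.log 2 N : ℝ) := by
          have := Nat.log_div_base 2 N
          have h3 : Nat.log 2 (N/2) + 1 = Nat.log 2 N := by omega
          exact_mod_cast congrArg (Nat.cast (R := ℝ)) h3
        have habs : |g N| ≤ |g N - g (N/2)| + |g (N/2)| := by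
          have := abs_add_le (g N - g (N/2)) (g (N/2))
          simpa using this
        calc |g N| ≤ |g N - g (N/2)| + |g (N/2)| := habs
          _ ≤ δ + (C + δ * ((Nat.log 2 (N/2) : ℝ) + 1)) := by linarith
          _ = C + δ * (((Nat.log 2 (N/2) : ℝ) + 1) + 1) := by ring
          _ = C + δ * ((Nat.log 2 N : ℝ) + 1) := by rw [hlog]
  obtain ⟨N₁, hN₁⟩ : ∃ N₁ : ℕ, ∀ N ≥ N₁, 4 * C / ε + 1 ≤ Real.log N := by
    refine ⟨⌈Real.exp (4 * C / ε + 1)⌉₊ + 1, fun N hN => ?_⟩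
    have h1 : Real.exp (4 * C / ε + 1) ≤ (N:ℝ) := by
      have h2 := Nat.le_ceil (Real.exp (4 * C / ε + 1))
      have h3 : (⌈Real.exp (4 * C / ε + 1)⌉₊ : ℝ) ≤ (N:ℝ) := by
        exact_mod_cast le_trans (Nat.le_succ _) hN
      linarith
    calc 4 * C / ε + 1 = Real.log (Real.exp (4 * C / ε + 1)) := (Real.log_exp _).symm
      _ ≤ Real.log N := Real.log_le_log (Real.exp_pos _) h1
  refine ⟨max N₁ 2, fun N hN => ?_⟩
  have hNN₁ : N₁ ≤ N := le_trans (le_max_left _ _) hN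
  have hN2 : 2 ≤ N := le_trans (le_max_right _ _) hN
  have hlogN : 4 * C / ε + 1 ≤ Real.log N := hN₁ N hNN₁
  have hlogNpos : 0 < Real.log N := by
    have : (0:ℝ) ≤ 4 * C / ε := by positivity
    linarith
  rw [Real.dist_eq, sub_zero, abs_div, abs_of_pos hlogNpos]
  have hnatlog : (Nat.log 2 N : ℝ) ≤ Real.log N / Real.log 2 := by
    have h1 : (2:ℕ) ^ (Nat.log 2 N) ≤ N := Nat.pow_log_le_self 2 (by omega)
    have h2 : ((2:ℝ)) ^ (Nat.log 2 N) ≤ (N:ℝ) := by exact_mod_cast h1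
    have h3 : Real.log ((2:ℝ) ^ (Nat.log 2 N)) ≤ Real.log N :=
      Real.log_le_log (by positivity) h2
    rw [Real.log_pow] at h3
    rw [le_div_iff₀ hlog2]
    exact h3
  have hlogN1 : 1 ≤ Nat.log 2 N := Nat.log_pos (by norm_num) hN2
  have hb : (Nat.log 2 N : ℝ) + 1 ≤ 2 * (Real.log N / Real.log 2) := by
    have h1 : (1:ℝ) ≤ (Nat.log 2 N : ℝ) := by exact_mod_cast hlogN1
    nlinarith
  have hmain : |g N| / Real.log N ≤ C / Real.log N + ε / 4 := by
    have h1 := key N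
    have h2 : δ * ((Nat.log 2 N : ℝ) + 1) ≤ δ * (2 * (Real.log N / Real.log 2)) :=
      mul_le_mul_of_nonneg_left hb hδ.le
    have h3 : δ * (2 * (Real.log N / Real.log 2)) = (ε / 4) * Real.log N := by
      rw [hδdef]
      field_simp
      ring
    rw [div_le_iff₀ hlogNpos]
    have h4 : C / Real.log N * Real.log N = C := by field_simp
    calc |g N| ≤ C + δ * ((Nat.log 2 N : ℝ) + 1) := h1
      _ ≤ C + (ε / 4) * Real.log N := by linarith
      _ = (C / Real.log N + ε / 4) * Real.log N := by field_simp
  have hClog : C / Real.log N ≤ ε / 4 := by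
    have h1 : C / Real.log N ≤ C / (4 * C / ε + 1) := by
      apply div_le_div_of_nonneg_left hC0 (by positivity) hlogN
    have h2 : C / (4 * C / ε + 1) ≤ ε / 4 := by
      rw [div_le_iff₀ (by positivity)]
      have hq : ε / 4 * (4 * C / ε + 1) = C + ε / 4 := by
        field_simp
      rw [hq]
      linarith
    linarith
  calc |g N| / Real.log N ≤ C / Real.log N + ε / 4 := hmain
    _ ≤ ε / 4 + ε / 4 := by linarith
    _ < ε := by linarith

lemma logdiff : Tendsto (fun N : ℕ => Real.log N - Real.log ((N/2 : ℕ))) atTop (𝓝 (Real.log 2)) := by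
  have hr : Tendsto (fun N : ℕ => (N:ℝ) / ((N/2 : ℕ):ℝ)) atTop (𝓝 2) := by
    have hupper : Tendsto (fun N : ℕ => 2 + (((N/2 : ℕ):ℝ))⁻¹) atTop (𝓝 2) := by
      have h0 : Tendsto (fun N : ℕ => (((N/2 : ℕ):ℝ))⁻¹) atTop (𝓝 0) :=
        tendsto_inv_atTop_nhds_zero_nat.comp tendsto_half
      simpa using (tendsto_const_nhds (x := (2:ℝ)) (f := atTop (α := ℕ))).add h0
    apply tendsto_of_tendsto_of_tendsto_of_le_of_le' (tendsto_const_nhds) hupper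
    · filter_upwards [eventually_ge_atTop 2] with N hN
      have ha1 : 1 ≤ N / 2 := by omega
      have haR : (0:ℝ) < ((N/2 : ℕ):ℝ) := by exact_mod_cast ha1
      rw [le_div_iff₀ haR]
      have h2 : 2 * (N / 2) ≤ N := by omega
      exact_mod_cast h2
    · filter_upwards [eventually_ge_atTop 2] with N hN
      have ha1 : 1 ≤ N / 2 := by omega
      have haR : (0:ℝ) < ((N/2 : ℕ):ℝ) := by exact_mod_cast ha1
      rw [div_le_iff₀ haR]
      have h2 : N ≤ 2 * (N / 2) + 1 := by omega
      have h3 : (N:ℝ) ≤ 2 * ((N/2 : ℕ):ℝ) + 1 := by exact_mod_cast h2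
      calc (N:ℝ) ≤ 2 * ((N/2 : ℕ):ℝ) + 1 := h3
        _ = (2 + (((N/2 : ℕ):ℝ))⁻¹) * ((N/2 : ℕ):ℝ) := by field_simp
  have hcont := (Real.continuousAt_log (by norm_num : (2:ℝ) ≠ 0)).tendsto.comp hr
  apply hcont.congr'
  filter_upwards [eventually_ge_atTop 2] with N hN
  have ha1 : 1 ≤ N / 2 := by omega
  have h1 : ((N:ℕ):ℝ) ≠ 0 := by
    have : (0:ℝ) < (N:ℝ) := by exact_mod_cast (by omega : 0 < N)
    linarith
  have h2 : ((N/2 : ℕ):ℝ) ≠ 0 := by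
    have : (0:ℝ) < ((N/2:ℕ):ℝ) := by exact_mod_cast ha1
    linarith
  show (Real.log ∘ fun N : ℕ => (N:ℝ) / ((N/2 : ℕ):ℝ)) N = _
  simp only [Function.comp]
  rw [Real.log_div h1 h2]

lemma additive_log {f : ℕ → ℝ}
    (hmul : ∀ m n, 1 ≤ m → 1 ≤ n → f (m * n) = f m + f n)
    (hD : Tendsto (fun N => f N - f (N/2)) atTop (𝓝 (f 2))) :
    ∀ n, 1 ≤ n → f n = (f 2 / Real.log 2) * Real.log n := by
  have hlog2 : Real.log 2 ≠ 0 := ne_of_gt (Real.log_pos (by norm_num))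
  set c := f 2 / Real.log 2 with hcdef
  have hc2 : c * Real.log 2 = f 2 := by
    rw [hcdef]
    field_simp
  have hg0 : Tendsto (fun N : ℕ => (f N - c * Real.log N)
      - (f (N/2) - c * Real.log ((N/2 : ℕ)))) atTop (𝓝 0) := by
    have h1 := hD.sub ((logdiff).const_mul c)
    rw [hc2, sub_self] at h1
    apply h1.congr
    intro N
    ring
  have htele := tele (g := fun N => f N - c * Real.log N) hg0
  have hflim : Tendsto (fun N : ℕ => f N / Real.log N) atTop (𝓝 c) := by
    have h2 := htele.add (tendsto_const_nhds (x := c) (f := atTop (α := ℕ)))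
    rw [zero_add] at h2
    apply h2.congr'
    filter_upwards [eventually_ge_atTop 2] with N hN
    have hlogpos : 0 < Real.log N := by
      apply Real.log_pos
      exact_mod_cast by omega
    field_simp
    ring
  have hf1 : f 1 = 0 := by
    have := hmul 1 1 le_rfl le_rfl
    simp at this
    linarith
  intro n hn
  rcases eq_or_lt_of_le hn with h1 | h2
  · rw [← h1]
    simp [hf1]
  · have hn2 : 2 ≤ n := h2
    have hpow : ∀ k : ℕ, f (n ^ (k+1)) = ((k:ℝ)+1) * f n := by
      intro k
      induction k with
      | zero => simp
      | succ k ih =>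
        have h3 : n ^ (k+2) = n ^ (k+1) * n := by ring
        rw [h3, hmul _ _ (Nat.one_le_iff_ne_zero.2 (by positivity)) hn, ih]
        push_cast
        ring
    have hlogn : 0 < Real.log n := Real.log_pos (by exact_mod_cast hn2)
    have hsub : Tendsto (fun k : ℕ => f (n ^ (k+1)) / Real.log ((n ^ (k+1) : ℕ)))
        atTop (𝓝 c) :=
      hflim.comp ((tendsto_pow_atTop_atTop_of_one_lt hn2).comp (tendsto_add_atTop_nat 1))
    have hconst : ∀ k : ℕ, f (n ^ (k+1)) / Real.log ((n ^ (k+1) : ℕ)) = f n / Real.log n := by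
      intro k
      have hcast : ((n ^ (k+1) : ℕ) : ℝ) = (n:ℝ) ^ (k+1) := by push_cast; ring
      rw [hpow k, hcast, Real.log_pow]
      have hk1 : ((k:ℝ)+1) ≠ 0 := by positivity
      rw [show ((k+1 : ℕ):ℝ) = (k:ℝ)+1 by push_cast; ring]
      rw [mul_div_mul_left _ _ hk1]
    have heq : c = f n / Real.log n :=
      tendsto_nhds_unique (hsub.congr hconst) tendsto_const_nhds
    rw [heq]
    field_simp


namespace BFL

variable (T : BFL)

noncomputable def c : ℝ := T.fu 2 / Real.log 2

lemma c_nonneg : 0 ≤ T.c :=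
  div_nonneg (T.fu_nonneg (by norm_num)) (Real.log_nonneg (by norm_num))

lemma fu_eq {n : ℕ} (hn : 1 ≤ n) : T.fu n = T.c * Real.log n :=
  additive_log (fun _ _ hm hn' => T.fu_mul hm hn') T.D_tendsto n hn

lemma shannon_ratio {m : ℕ} (k : Fin (m+1) → ℕ) (hk : ∀ i, 1 ≤ k i) :
    shannon (fun i => (k i : ℝ) / ((∑ j, k j : ℕ) : ℝ))
      = Real.log ((∑ j, k j : ℕ) : ℝ)
        - ∑ i, ((k i : ℝ) / ((∑ j, k j : ℕ) : ℝ)) * Real.log (k i) := by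
  have hNpos : 0 < ∑ j, k j :=
    lt_of_lt_of_le (hk 0) (Finset.single_le_sum (fun i _ => Nat.zero_le _) (Finset.mem_univ 0))
  have hNR : (0:ℝ) < ((∑ j, k j : ℕ) : ℝ) := by exact_mod_cast hNpos
  have hsum1 : ∑ i, ((k i : ℝ) / ((∑ j, k j : ℕ) : ℝ)) = 1 := (isProb_ratio k hk).2
  rw [shannon]
  have hterm : ∀ i : Fin (m+1), ((k i : ℝ) / ((∑ j, k j : ℕ) : ℝ))
        * Real.log ((k i : ℝ) / ((∑ j, k j : ℕ) : ℝ))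
      = ((k i : ℝ) / ((∑ j, k j : ℕ) : ℝ)) * Real.log (k i)
        - ((k i : ℝ) / ((∑ j, k j : ℕ) : ℝ)) * Real.log ((∑ j, k j : ℕ) : ℝ) := by
    intro i
    have hki : (0:ℝ) < (k i : ℝ) := by exact_mod_cast hk i
    rw [Real.log_div (ne_of_gt hki) (ne_of_gt hNR)]
    ring
  rw [Finset.sum_congr rfl (fun i _ => hterm i), Finset.sum_sub_distrib, ← Finset.sum_mul, hsum1]
  ring

lemma I_ratio {m : ℕ} (k : Fin (m+1) → ℕ) (hk : ∀ i, 1 ≤ k i) :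
    T.I (fun i => (k i : ℝ) / ((∑ j, k j : ℕ) : ℝ))
      = T.c * shannon (fun i => (k i : ℝ) / ((∑ j, k j : ℕ) : ℝ)) := by
  have hNpos : 1 ≤ ∑ j, k j :=
    le_trans (hk 0) (Finset.single_le_sum (fun i _ => Nat.zero_le _) (Finset.mem_univ 0))
  rw [T.grouping_rational m k hk, shannon_ratio k hk]
  rw [T.fu_eq hNpos]
  have hterm : ∀ i : Fin (m+1), ((k i : ℝ) / ((∑ j, k j : ℕ) : ℝ)) * T.fu (k i)
      = ((k i : ℝ) / ((∑ j, k j : ℕ) : ℝ)) * (T.c * Real.log (k i)) := by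
    intro i
    rw [T.fu_eq (hk i)]
  rw [Finset.sum_congr rfl (fun i _ => hterm i)]
  rw [mul_sub, Finset.mul_sum]
  congr 1
  apply Finset.sum_congr rfl
  intro i _
  ring

lemma shannon_tendsto {X : Type} [Fintype X] {pn : ℕ → X → ℝ} {p : X → ℝ}
    (h : ∀ i, Tendsto (fun j => pn j i) atTop (𝓝 (p i))) :
    Tendsto (fun j => shannon (pn j)) atTop (𝓝 (shannon p)) := by
  simp only [shannon]
  apply Tendsto.neg
  apply tendsto_finset_sum
  intro i _
  exact (Real.continuous_mul_log.tendsto (p i)).comp (h i)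

lemma I_eq_shannon_fin {m : ℕ} {p : Fin (m+1) → ℝ} (hp : IsProb p) :
    T.I p = T.c * shannon p := by
  classical
  set k : ℕ → Fin (m+1) → ℕ := fun t i => ⌊p i * t⌋₊ + 1 with hkdef
  have hk1 : ∀ t i, 1 ≤ k t i := fun t i => Nat.le_add_left 1 _
  set q : ℕ → Fin (m+1) → ℝ := fun t i => (k t i : ℝ) / ((∑ j, k t j : ℕ) : ℝ) with hqdef
  have hqprob : ∀ t, IsProb (q t) := fun t => isProb_ratio (k t) (hk1 t)
  have hfl : ∀ (t : ℕ) (i : Fin (m+1)), ((⌊p i * (t:ℝ)⌋₊ : ℝ)) ≤ p i * t :=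
    fun t i => Nat.floor_le (mul_nonneg (hp.1 i) (by positivity))
  have hfu : ∀ (t : ℕ) (i : Fin (m+1)), p i * (t:ℝ) < (⌊p i * (t:ℝ)⌋₊ : ℝ) + 1 :=
    fun t i => Nat.lt_floor_add_one _
  have hklow : ∀ (t : ℕ) (i : Fin (m+1)), p i * (t:ℝ) < (k t i : ℝ) := by
    intro t i
    rw [hkdef]
    push_cast
    exact hfu t i
  have hkup : ∀ (t : ℕ) (i : Fin (m+1)), (k t i : ℝ) ≤ p i * (t:ℝ) + 1 := by
    intro t i
    rw [hkdef]
    push_cast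
    have := hfl t i
    linarith
  have hSlow : ∀ t : ℕ, (t:ℝ) < ((∑ j, k t j : ℕ) : ℝ) := by
    intro t
    have h1 : (t:ℝ) = ∑ i : Fin (m+1), p i * t := by
      rw [← Finset.sum_mul, hp.2, one_mul]
    have h2 : ((∑ j, k t j : ℕ) : ℝ) = ∑ i : Fin (m+1), (k t i : ℝ) := by push_cast; rfl
    rw [h1, h2]
    apply Finset.sum_lt_sum_of_nonempty Finset.univ_nonempty
    intro i _
    exact hklow t i
  have hSup : ∀ t : ℕ, ((∑ j, k t j : ℕ) : ℝ) ≤ (t:ℝ) + ((m:ℝ) + 1) := by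
    intro t
    have h2 : ((∑ j, k t j : ℕ) : ℝ) = ∑ i : Fin (m+1), (k t i : ℝ) := by push_cast; rfl
    rw [h2]
    have h3 : ∑ i : Fin (m+1), (k t i : ℝ) ≤ ∑ i : Fin (m+1), (p i * t + 1) :=
      Finset.sum_le_sum (fun i _ => hkup t i)
    have h4 : ∑ i : Fin (m+1), (p i * (t:ℝ) + 1) = (t:ℝ) + ((m:ℝ)+1) := by
      rw [Finset.sum_add_distrib, ← Finset.sum_mul, hp.2, one_mul]
      simp [Finset.card_univ]
    linarith
  have hSpos : ∀ t : ℕ, (0:ℝ) < ((∑ j, k t j : ℕ) : ℝ) := by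
    intro t
    have := hSlow t
    have ht0 : (0:ℝ) ≤ (t:ℝ) := by positivity
    linarith
  have hconv : ∀ i, Tendsto (fun t => q t i) atTop (𝓝 (p i)) := by
    intro i
    have hlow : Tendsto (fun t : ℕ => p i * (t:ℝ) / ((t:ℝ) + ((m:ℝ)+1))) atTop (𝓝 (p i)) := by
      have h5 : Tendsto (fun t : ℕ => (t:ℝ) / ((t:ℝ) + ((m:ℝ)+1))) atTop (𝓝 1) :=
        tendsto_natCast_div_add_atTop ((m:ℝ)+1)
      have h6 := h5.const_mul (p i)
      rw [mul_one] at h6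
      apply h6.congr
      intro t
      ring
    have hup : Tendsto (fun t : ℕ => p i + 1 / (t:ℝ)) atTop (𝓝 (p i)) := by
      have := tendsto_one_div_atTop_nhds_zero_nat (𝕜 := ℝ)
      have h7 := (tendsto_const_nhds (x := p i) (f := atTop (α := ℕ))).add this
      rwa [add_zero] at h7
    apply tendsto_of_tendsto_of_tendsto_of_le_of_le' hlow hup
    · filter_upwards [eventually_ge_atTop 1] with t ht
      simp only [hqdef]
      have h8 : p i * (t:ℝ) ≤ (k t i : ℝ) := (hklow t i).le
      have h9 := hSup t
      have h10 := hSpos t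
      gcongr
    · filter_upwards [eventually_ge_atTop 1] with t ht
      simp only [hqdef]
      have htR : (0:ℝ) < (t:ℝ) := by exact_mod_cast ht
      have h8 : (k t i : ℝ) ≤ p i * (t:ℝ) + 1 := hkup t i
      have h9 := (hSlow t).le
      have h11 : q t i ≤ (p i * (t:ℝ) + 1) / (t:ℝ) := by
        simp only [hqdef]
        gcongr
        · have := hp.1 i
          positivity
      calc (k t i : ℝ) / ((∑ j, k t j : ℕ) : ℝ) ≤ (p i * (t:ℝ) + 1) / (t:ℝ) := h11
        _ = p i + 1 / (t:ℝ) := by field_simp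
  have hIq : ∀ t, T.I (q t) = T.c * shannon (q t) := fun t => T.I_ratio (k t) (hk1 t)
  have hlim1 : Tendsto (fun t => T.I (q t)) atTop (𝓝 (T.I p)) :=
    T.hcont q (fun _ => uu) (fun _ => fun _ => ()) p uu (fun _ => ())
      hqprob (fun _ => isProb_uu) (fun t => isMP_toUnit (hqprob t)) hp isProb_uu
      (isMP_toUnit hp) (Eventually.of_forall fun _ => rfl) hconv (fun _ => tendsto_const_nhds)
  have hlim2 : Tendsto (fun t => T.I (q t)) atTop (𝓝 (T.c * shannon p)) := by
    have := (shannon_tendsto hconv).const_mul T.c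
    apply this.congr
    intro t
    rw [hIq t]
  exact tendsto_nhds_unique hlim1 hlim2

lemma I_eq_shannon {X : Type} [Fintype X] {p : X → ℝ} (hp : IsProb p) :
    T.I p = T.c * shannon p := by
  have hne : Nonempty X := by
    by_contra h
    rw [not_nonempty_iff] at h
    have h2 := hp.2
    rw [Finset.univ_eq_empty, Finset.sum_empty] at h2
    norm_num at h2
  obtain ⟨m, hm⟩ : ∃ m, Fintype.card X = m + 1 := by
    have := Fintype.card_pos (α := X)
    exact ⟨Fintype.card X - 1, by omega⟩
  have e : X ≃ Fin (m+1) := Fintype.equivFinOfCardEq hm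
  set q : Fin (m+1) → ℝ := fun j => p (e.symm j) with hqdef
  have hpq : ∀ x, p x = q (e x) := by
    intro x
    rw [hqdef]
    simp
  have hqprob : IsProb q := by
    constructor
    · intro j
      rw [hqdef]
      exact hp.1 _
    · rw [hqdef]
      rw [Equiv.sum_comp e.symm p]
      exact hp.2
  have h1 : T.I p = T.I q := T.I_congr e hpq hqprob
  have h2 : shannon p = shannon q := by
    rw [shannon, shannon, hqdef]
    congr 1
    exact (Equiv.sum_comp e.symm (fun x => p x * Real.log (p x))).symm
  rw [h1, h2]
  exact T.I_eq_shannon_fin hqprob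

end BFL
end BFLaux

/-- Characterization of Shannon information loss (Baez–Fritz–Leinster, Theorem 2). -/
theorem stmt0
    (F : ∀ {X Y : Type} [Fintype X] [Fintype Y], (X → ℝ) → (Y → ℝ) → (X → Y) → ℝ)
    (hnn : ∀ {X Y : Type} [Fintype X] [Fintype Y] (p : X → ℝ) (q : Y → ℝ) (f : X → Y),
      IsProb p → IsProb q → IsMP p q f → 0 ≤ F p q f)
    (hfunc : ∀ {X Y Z : Type} [Fintype X] [Fintype Y] [Fintype Z]
      (p : X → ℝ) (q : Y → ℝ) (r : Z → ℝ) (g : X → Y) (f : Y → Z),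
      IsProb p → IsProb q → IsProb r → IsMP p q g → IsMP q r f →
      F p r (f ∘ g) = F q r f + F p q g)
    (hcvx : ∀ {X X' Y Y' : Type} [Fintype X] [Fintype X'] [Fintype Y] [Fintype Y']
      (p : X → ℝ) (p' : X' → ℝ) (q : Y → ℝ) (q' : Y' → ℝ) (f : X → X') (g : Y → Y')
      (lam : ℝ), 0 ≤ lam → lam ≤ 1 →
      IsProb p → IsProb p' → IsProb q → IsProb q' → IsMP p p' f → IsMP q q' g →
      F (cvx lam p q) (cvx lam p' q') (Sum.map f g)
        = lam * F p p' f + (1 - lam) * F q q' g)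
    (hcont : ∀ {X Y : Type} [Fintype X] [Fintype Y]
      (pn : ℕ → X → ℝ) (qn : ℕ → Y → ℝ) (fn : ℕ → X → Y)
      (p : X → ℝ) (q : Y → ℝ) (f : X → Y),
      (∀ n, IsProb (pn n)) → (∀ n, IsProb (qn n)) → (∀ n, IsMP (pn n) (qn n) (fn n)) →
      IsProb p → IsProb q → IsMP p q f →
      (∀ᶠ n in atTop, fn n = f) →
      (∀ i, Tendsto (fun n => pn n i) atTop (𝓝 (p i))) →
      (∀ j, Tendsto (fun n => qn n j) atTop (𝓝 (q j))) →
      Tendsto (fun n => F (pn n) (qn n) (fn n)) atTop (𝓝 (F p q f))) :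
    ∃ c : ℝ, 0 ≤ c ∧ ∀ {X Y : Type} [Fintype X] [Fintype Y]
      (p : X → ℝ) (q : Y → ℝ) (f : X → Y),
      IsProb p → IsProb q → IsMP p q f →
      F p q f = c * (shannon p - shannon q) := by
  let T : BFLaux.BFL := ⟨@F, @hnn, @hfunc, @hcvx, @hcont⟩
  refine ⟨T.c, T.c_nonneg, ?_⟩
  intro X Y _ _ p q f hp hq hf
  have hsplit := T.I_split hp hq hf
  have h1 := T.I_eq_shannon hp
  have h2 := T.I_eq_shannon hq
  have h3 : F p q f = T.F p q f := rfl
  rw [h3, mul_sub]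
  linarith
end

section
/- For any constant c ≥ 0, the map F defined on measure-preserving functions f : (X,p) → (Y,q) between finite probability spaces by F(f) = c(H(p) − H(q)) takes values in [0,∞) and satisfies: (1) Functoriality: F(f ∘ g) = F(f) + F(g) for composable measure-preserving functions; (2) Convex linearity: F(λf ⊕ (1−λ)g) = λF(f) + (1−λ)F(g) for all λ ∈ [0,1]; (3) Continuity: F(f_n) → F(f) whenever f_n converges to f. -/
open scoped BigOperators Classical
open Filter Topology Real

lemma aux_le_q {X Y : Type} [Fintype X] [Fintype Y] {p : X → ℝ} {q : Y → ℝ} {f : X → Y}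
    (hp : ∀ i, 0 ≤ p i) (hf : IsMP p q f) (i : X) : p i ≤ q (f i) := by
  rw [hf (f i)]
  have := Finset.single_le_sum (f := fun i' => if f i' = f i then p i' else 0)
    (fun i' _ => by split <;> [exact hp i'; rfl]) (Finset.mem_univ i)
  simpa using this

lemma shannon_mono {X Y : Type} [Fintype X] [Fintype Y] (p : X → ℝ) (q : Y → ℝ) (f : X → Y)
    (hp : IsProb p) (hq : IsProb q) (hf : IsMP p q f) : shannon q ≤ shannon p := by
  unfold shannon
  rw [neg_le_neg_iff]
  have key : ∑ j, q j * Real.log (q j) = ∑ i, p i * Real.log (q (f i)) := by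
    calc ∑ j, q j * Real.log (q j)
        = ∑ j, ∑ i, (if f i = j then p i * Real.log (q j) else 0) := by
          refine Finset.sum_congr rfl fun j _ => ?_
          rw [hf j, Finset.sum_mul]
          refine Finset.sum_congr rfl fun i _ => ?_
          split <;> simp
      _ = ∑ i, ∑ j, (if f i = j then p i * Real.log (q j) else 0) := Finset.sum_comm
      _ = ∑ i, p i * Real.log (q (f i)) := by
          refine Finset.sum_congr rfl fun i _ => ?_
          simp
  rw [key]
  refine Finset.sum_le_sum fun i _ => ?_
  rcases eq_or_lt_of_le (hp.1 i) with h | h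
  · simp [← h]
  · exact mul_le_mul_of_nonneg_left
      (Real.log_le_log h (aux_le_q hp.1 hf i)) (hp.1 i)

lemma aux_mul_log_mul (a b : ℝ) (ha : 0 ≤ a) (hb : 0 ≤ b) :
    (a * b) * Real.log (a * b) = a * (b * Real.log b) + (a * Real.log a) * b := by
  rcases eq_or_lt_of_le ha with h | h
  · simp [← h]
  rcases eq_or_lt_of_le hb with h' | h'
  · simp [← h']
  rw [Real.log_mul h.ne' h'.ne']
  ring

lemma shannon_cvx {X Y : Type} [Fintype X] [Fintype Y] (lam : ℝ) (h0 : 0 ≤ lam) (h1 : lam ≤ 1)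
    (p : X → ℝ) (q : Y → ℝ) (hp : IsProb p) (hq : IsProb q) :
    shannon (cvx lam p q) = lam * shannon p + (1 - lam) * shannon q
      - lam * Real.log lam - (1 - lam) * Real.log (1 - lam) := by
  unfold shannon cvx
  rw [Fintype.sum_sum_type]
  simp only [Sum.elim_inl, Sum.elim_inr]
  have e1 : ∑ i, lam * p i * Real.log (lam * p i)
      = lam * ∑ i, p i * Real.log (p i) + (lam * Real.log lam) * ∑ i, p i := by
    rw [Finset.mul_sum, Finset.mul_sum, ← Finset.sum_add_distrib]
    exact Finset.sum_congr rfl fun i _ => aux_mul_log_mul lam (p i) h0 (hp.1 i)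
  have e2 : ∑ j, (1 - lam) * q j * Real.log ((1 - lam) * q j)
      = (1 - lam) * ∑ j, q j * Real.log (q j) + ((1 - lam) * Real.log (1 - lam)) * ∑ j, q j := by
    rw [Finset.mul_sum, Finset.mul_sum, ← Finset.sum_add_distrib]
    exact Finset.sum_congr rfl fun j _ => aux_mul_log_mul (1 - lam) (q j) (by linarith) (hq.1 j)
  rw [e1, e2, hp.2, hq.2]
  ring

lemma shannon_tendsto {X : Type} [Fintype X] (pn : ℕ → X → ℝ) (p : X → ℝ)
    (h : ∀ i, Tendsto (fun n => pn n i) atTop (𝓝 (p i))) :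
    Tendsto (fun n => shannon (pn n)) atTop (𝓝 (shannon p)) := by
  unfold shannon
  refine Tendsto.neg (tendsto_finset_sum _ fun i _ => ?_)
  exact (Real.continuous_mul_log.tendsto (p i)).comp (h i)

/-- The map `f ↦ c (H(p) - H(q))` is nonnegative, functorial, convex linear and continuous. -/
theorem stmt1 (c : ℝ) (hc : 0 ≤ c) :
    -- takes values in [0, ∞)
    (∀ {X Y : Type} [Fintype X] [Fintype Y] (p : X → ℝ) (q : Y → ℝ) (f : X → Y),
      IsProb p → IsProb q → IsMP p q f → 0 ≤ c * (shannon p - shannon q)) ∧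
    -- functoriality
    (∀ {X Y Z : Type} [Fintype X] [Fintype Y] [Fintype Z]
      (p : X → ℝ) (q : Y → ℝ) (r : Z → ℝ) (g : X → Y) (f : Y → Z),
      IsProb p → IsProb q → IsProb r → IsMP p q g → IsMP q r f →
      c * (shannon p - shannon r)
        = c * (shannon q - shannon r) + c * (shannon p - shannon q)) ∧
    -- convex linearity
    (∀ {X X' Y Y' : Type} [Fintype X] [Fintype X'] [Fintype Y] [Fintype Y']
      (p : X → ℝ) (p' : X' → ℝ) (q : Y → ℝ) (q' : Y' → ℝ) (f : X → X') (g : Y → Y')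
      (lam : ℝ), 0 ≤ lam → lam ≤ 1 →
      IsProb p → IsProb p' → IsProb q → IsProb q' → IsMP p p' f → IsMP q q' g →
      c * (shannon (cvx lam p q) - shannon (cvx lam p' q'))
        = lam * (c * (shannon p - shannon p')) + (1 - lam) * (c * (shannon q - shannon q'))) ∧
    -- continuity
    (∀ {X Y : Type} [Fintype X] [Fintype Y]
      (pn : ℕ → X → ℝ) (qn : ℕ → Y → ℝ) (fn : ℕ → X → Y)
      (p : X → ℝ) (q : Y → ℝ) (f : X → Y),
      (∀ n, IsProb (pn n)) → (∀ n, IsProb (qn n)) → (∀ n, IsMP (pn n) (qn n) (fn n)) →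
      IsProb p → IsProb q → IsMP p q f →
      (∀ᶠ n in atTop, fn n = f) →
      (∀ i, Tendsto (fun n => pn n i) atTop (𝓝 (p i))) →
      (∀ j, Tendsto (fun n => qn n j) atTop (𝓝 (q j))) →
      Tendsto (fun n => c * (shannon (pn n) - shannon (qn n))) atTop
        (𝓝 (c * (shannon p - shannon q)))) := by
  refine ⟨?_, ?_, ?_, ?_⟩
  · intro X Y _ _ p q f hp hq hf
    exact mul_nonneg hc (sub_nonneg.mpr (shannon_mono p q f hp hq hf))
  · intro X Y Z _ _ _ p q r g f _ _ _ _ _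
    ring
  · intro X X' Y Y' _ _ _ _ p p' q q' f g lam h0 h1 hp hp' hq hq' _ _
    rw [shannon_cvx lam h0 h1 p q hp hq, shannon_cvx lam h0 h1 p' q' hp' hq']
    ring
  · intro X Y _ _ pn qn fn p q f _ _ _ _ _ _ _ hpn hqn
    exact Tendsto.const_mul c ((shannon_tendsto pn p hpn).sub (shannon_tendsto qn q hqn))
end

section
/- Let F be a map assigning to every measure-preserving function f : (X,p) → (Y,q) between finite measure spaces a number F(f) ∈ [0,∞). Suppose F satisfies: (1) Functoriality: F(f ∘ g) = F(f) + F(g) whenever f and g are composable; (2) Additivity: F(f ⊕ g) = F(f) + F(g) for all measure-preserving functions f, g; (3) Homogeneity: F(λf) = λF(f) for all measure-preserving functions f and all λ ∈ [0,∞); (4) Continuity: F(f_n) → F(f) whenever f_n converges to f. Then there exists a constant c ≥ 0 such that F(f) = c(H(p) − H(q)) for every measure-preserving function f : (X,p) → (Y,q), where H denotes the extended Shannon entropy. -/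
open scoped BigOperators Classical
open Filter Topology Real

lemma addmul_null (β : ℕ → ℝ)
    (hmul : ∀ m n, 1 ≤ m → 1 ≤ n → β (m * n) = β m + β n)
    (h2 : β 2 = 0)
    (hΔ : Tendsto (fun n => β (n + 1) - β n) atTop (𝓝 0)) :
    ∀ m, 1 ≤ m → β m = 0 := by
  have hβ1 : β 1 = 0 := by
    have := hmul 1 1 le_rfl le_rfl; simp at this; linarith
  have hdbl : ∀ n, 1 ≤ n → β (2 * n) = β n := by
    intro n hn; rw [hmul 2 n (by norm_num) hn, h2, zero_add]
  set δ : ℕ → ℝ := fun n => |β (n + 1) - β n| with hδ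
  have hne : ∀ J : ℕ, (Finset.Icc (2 ^ J - 1) (2 ^ (J + 1))).Nonempty := by
    intro J
    refine ⟨2 ^ J - 1, Finset.mem_Icc.2 ⟨le_rfl, ?_⟩⟩
    have : 2 ^ J ≤ 2 ^ (J + 1) := Nat.pow_le_pow_right (by norm_num) (Nat.le_succ _)
    omega
  set γ : ℕ → ℝ := fun J => (Finset.Icc (2 ^ J - 1) (2 ^ (J + 1))).sup' (hne J) δ with hγ
  have hγnn : ∀ J, 0 ≤ γ J := by
    intro J
    have hm0 : (2 ^ J - 1) ∈ Finset.Icc (2 ^ J - 1) (2 ^ (J + 1)) := by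
      refine Finset.mem_Icc.2 ⟨le_rfl, ?_⟩
      have : 2 ^ J ≤ 2 ^ (J + 1) := Nat.pow_le_pow_right (by norm_num) (Nat.le_succ _)
      omega
    exact le_trans (abs_nonneg _) (Finset.le_sup' δ hm0)
  set C : ℕ → ℝ := fun J => ∑ j ∈ Finset.range J, γ j with hC
  have hCmono : Monotone C := by
    intro i j hij
    exact Finset.sum_le_sum_of_subset_of_nonneg (Finset.range_subset_range.2 hij)
      (fun k _ _ => hγnn k)
  have bound : ∀ N, 1 ≤ N → |β N| ≤ C (Nat.log 2 N + 1) := by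
    intro N
    induction N using Nat.strong_induction_on with
    | _ N ih =>
      intro hN
      rcases eq_or_lt_of_le hN with h1 | h2
      · rw [← h1]
        have hh : C (Nat.log 2 1 + 1) = γ 0 := by
          simp [hC, Nat.log_one_right, Finset.sum_range_one]
        rw [hh, hβ1]
        simpa using hγnn 0
      · -- N ≥ 2
        set J := Nat.log 2 N with hJ
        have hJ1 : 1 ≤ J := Nat.log_pos (by norm_num) h2
        set q := N / 2 with hq
        have hq1 : 1 ≤ q := Nat.one_le_div_iff (by norm_num) |>.2 h2
        have hqlt : q < N := Nat.div_lt_self (by omega) (by norm_num)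
        have hlogq : Nat.log 2 q = J - 1 := by
          rw [hq, hJ, Nat.log_div_base]
        have ihq : |β q| ≤ C J := by
          have h' := ih q hqlt hq1
          have h'' : J - 1 + 1 = J := by omega
          rwa [hlogq, h''] at h'
        have hNlow : 2 ^ J ≤ N := Nat.pow_log_le_self 2 (by omega)
        have hNhigh : N < 2 ^ (J + 1) := Nat.lt_pow_succ_log_self (by norm_num) N
        have hCJ : C (J + 1) = C J + γ J := by
          simp [hC, Finset.sum_range_succ]
        rcases Nat.even_or_odd N with he | ho
        · obtain ⟨t, ht⟩ := he
          have hteq : N = 2 * q := by omega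
          have hbq : β N = β q := by rw [hteq]; exact hdbl q hq1
          rw [hbq, hCJ]
          exact le_trans ihq (by linarith [hγnn J])
        · obtain ⟨t, ht⟩ := ho
          have hteq : N = 2 * q + 1 := by omega
          have h2q : β (2 * q) = β q := hdbl q hq1
          have hmem : (2 * q) ∈ Finset.Icc (2 ^ J - 1) (2 ^ (J + 1)) :=
            Finset.mem_Icc.2 ⟨by omega, by omega⟩
          have hle : δ (2 * q) ≤ γ J := Finset.le_sup' δ hmem
          have key : β N = β q + (β (2 * q + 1) - β (2 * q)) := by
            rw [h2q, ← hteq]; ring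
          have habs : |β N| ≤ |β q| + δ (2 * q) := by
            calc |β N| = |β q + (β (2 * q + 1) - β (2 * q))| := by rw [← key]
            _ ≤ |β q| + |β (2 * q + 1) - β (2 * q)| := abs_add_le _ _
            _ = |β q| + δ (2 * q) := rfl
          rw [hCJ]
          linarith
  have hγ0 : Tendsto γ atTop (𝓝 0) := by
    rw [Metric.tendsto_atTop]
    intro ε hε
    rw [Metric.tendsto_atTop] at hΔ
    obtain ⟨T, hT⟩ := hΔ (ε / 2) (by linarith)
    refine ⟨T, fun J hJ => ?_⟩
    have hub : γ J ≤ ε / 2 := by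
      apply Finset.sup'_le
      intro t htm
      have ht : T ≤ t := by
        have h1 := (Finset.mem_Icc.1 htm).1
        have h2 : J < 2 ^ J := Nat.lt_two_pow_self
        omega
      have h3 := hT t ht
      rw [Real.dist_eq, sub_zero] at h3
      exact le_of_lt h3
    rw [Real.dist_eq, sub_zero, abs_of_nonneg (hγnn J)]
    linarith
  have hCes : Tendsto (fun J : ℕ => (J : ℝ)⁻¹ * C J) atTop (𝓝 0) := hγ0.cesaro
  intro m hm
  rcases eq_or_lt_of_le hm with h1 | h2
  · rw [← h1]; exact hβ1
  have hpow : ∀ k : ℕ, β (m ^ k) = (k : ℝ) * β m := by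
    intro k
    induction k with
    | zero => simpa using hβ1
    | succ k ihk =>
      rw [pow_succ, hmul (m ^ k) m (Nat.one_le_pow _ _ (by omega)) hm, ihk]
      push_cast; ring
  set L := Nat.log 2 m + 1 with hL
  have hmL : m < 2 ^ L := Nat.lt_pow_succ_log_self (by norm_num) m
  have hlogk : ∀ k, 1 ≤ k → Nat.log 2 (m ^ k) + 1 ≤ k * L := by
    intro k hk
    have h1 : m ^ k < 2 ^ (k * L) := by
      calc m ^ k < (2 ^ L) ^ k := Nat.pow_lt_pow_left hmL (by omega)
      _ = 2 ^ (k * L) := by rw [← pow_mul, Nat.mul_comm]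
    have h2' : Nat.log 2 (m ^ k) < k * L :=
      Nat.log_lt_of_lt_pow (by positivity) h1
    omega
  have hbd : ∀ k : ℕ, 1 ≤ k → |β m| ≤ C (k * L) / k := by
    intro k hk
    have h1 : (k : ℝ) * |β m| = |β (m ^ k)| := by
      rw [hpow k, abs_mul, Nat.abs_cast]
    have h2' : |β (m ^ k)| ≤ C (Nat.log 2 (m ^ k) + 1) :=
      bound _ (Nat.one_le_pow _ _ (by omega))
    have h3 : C (Nat.log 2 (m ^ k) + 1) ≤ C (k * L) := hCmono (hlogk k hk)
    have hkpos : (0 : ℝ) < k := by exact_mod_cast hk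
    rw [le_div_iff₀ hkpos]
    calc |β m| * k = k * |β m| := by ring
    _ = |β (m ^ k)| := h1
    _ ≤ C (k * L) := le_trans h2' h3
  have htend : Tendsto (fun k : ℕ => C (k * L) / k) atTop (𝓝 0) := by
    have hcomp : Tendsto (fun k : ℕ => k * L) atTop atTop := by
      apply Filter.tendsto_atTop_atTop.2
      intro b
      exact ⟨b, fun k hk => le_trans hk (Nat.le_mul_of_pos_right k (by omega))⟩
    have h1 : Tendsto (fun k : ℕ => ((k * L : ℕ) : ℝ)⁻¹ * C (k * L)) atTop (𝓝 0) :=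
      hCes.comp hcomp
    have h2' : Tendsto (fun k : ℕ => (L : ℝ) * (((k * L : ℕ) : ℝ)⁻¹ * C (k * L)))
        atTop (𝓝 ((L : ℝ) * 0)) := h1.const_mul _
    rw [mul_zero] at h2'
    apply h2'.congr'
    filter_upwards [Ici_mem_atTop 1] with k hk
    have hkpos : (0 : ℝ) < k := by exact_mod_cast (Set.mem_Ici.1 hk)
    have hLpos : (0 : ℝ) < L := by positivity
    push_cast
    field_simp
  have : |β m| ≤ 0 := by
    apply ge_of_tendsto htend
    filter_upwards [Ici_mem_atTop 1] with k hk
    exact hbd k hk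
  exact abs_eq_zero.1 (le_antisymm this (abs_nonneg _))

noncomputable def dL (a b : ℝ) : ℝ :=
  (a + b) * Real.log (a + b) - a * Real.log a - b * Real.log b

lemma dL_scale {lam : ℝ} (hlam : 0 ≤ lam) (a b : ℝ) (ha : 0 ≤ a) (hb : 0 ≤ b) :
    dL (lam * a) (lam * b) = lam * dL a b := by
  have key : ∀ x : ℝ, 0 ≤ x → (lam * x) * Real.log (lam * x)
      = lam * (x * Real.log x) + x * (lam * Real.log lam) := by
    intro x hx
    rcases eq_or_lt_of_le hlam with h0 | hlam'
    · rw [← h0]; ring_nf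
    rcases eq_or_lt_of_le hx with h0 | hx'
    · rw [← h0]; ring_nf
    rw [Real.log_mul (by positivity) (by positivity)]
    ring
  unfold dL
  rw [← mul_add, key _ (by positivity), key a ha, key b hb]
  ring


section keyU

variable (u : ℝ → ℝ → ℝ)
    (hnn : ∀ a b : ℝ, 0 ≤ a → 0 ≤ b → 0 ≤ u a b)
    (hz : ∀ a : ℝ, 0 ≤ a → u a 0 = 0)
    (hsym : ∀ a b : ℝ, 0 ≤ a → 0 ≤ b → u a b = u b a)
    (hhom : ∀ lam a b : ℝ, 0 ≤ lam → 0 ≤ a → 0 ≤ b →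
      u (lam * a) (lam * b) = lam * u a b)
    (hco : ∀ a b c : ℝ, 0 ≤ a → 0 ≤ b → 0 ≤ c →
      u (a + b) c + u a b = u a (b + c) + u b c)

noncomputable def Aseq : ℕ → ℝ
  | 0 => 0
  | n + 1 => Aseq n + u 1 n

lemma Aseq_zero : Aseq u 0 = 0 := rfl
lemma Aseq_succ (n : ℕ) : Aseq u (n + 1) = Aseq u n + u 1 n := rfl

include hz in
lemma Aseq_one : Aseq u 1 = 0 := by
  rw [show (1:ℕ) = 0 + 1 from rfl, Aseq_succ, Aseq_zero, Nat.cast_zero, hz 1 zero_le_one]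
  ring

include hz hsym hco in
lemma u_nat (k l : ℕ) : u k l = Aseq u (k + l) - Aseq u k - Aseq u l := by
  induction k generalizing l with
  | zero =>
    rw [Nat.cast_zero, hsym 0 l (le_rfl) (Nat.cast_nonneg l), hz l (Nat.cast_nonneg l)]
    simp [Aseq_zero]
  | succ k ih =>
    have hco' := hco (k : ℝ) 1 (l : ℝ) (Nat.cast_nonneg k) zero_le_one (Nat.cast_nonneg l)
    have h1 : u (k : ℝ) ((l : ℝ) + 1) = Aseq u (k + l + 1) - Aseq u k - Aseq u (l + 1) := by
      have := ih (l + 1)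
      push_cast at this
      rw [this]; ring_nf
    have h2 : u 1 (l : ℝ) = Aseq u (l + 1) - Aseq u l := by
      rw [Aseq_succ]; ring
    have h3 : u (k : ℝ) 1 = Aseq u (k + 1) - Aseq u k := by
      have := ih 1
      push_cast at this
      rw [this, Aseq_one u hz]; ring
    have h4 : u ((k : ℝ) + 1) (l : ℝ) = u (k : ℝ) (1 + (l : ℝ)) + u 1 l - u k 1 := by
      linarith
    push_cast
    rw [h4, add_comm (1 : ℝ) (l : ℝ), h1, h2, h3]
    have : (k : ℕ) + 1 + l = k + l + 1 := by omega
    rw [this]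
    ring

include hz hsym hco hhom in
lemma Aseq_mult (m n : ℕ) :
    Aseq u (m * n) = (m : ℝ) * Aseq u n + (n : ℝ) * Aseq u m := by
  induction n with
  | zero => simp [Aseq_zero]
  | succ n ih =>
    have h1 : m * (n + 1) = m * n + m := by ring
    have h2 : Aseq u (m * n + m) = u (m * n : ℕ) (m : ℕ) + Aseq u (m * n) + Aseq u m := by
      have := u_nat u hz hsym hco (m * n) m
      linarith
    have h3 : u ((m * n : ℕ) : ℝ) ((m : ℕ) : ℝ) = (m : ℝ) * u (n : ℝ) 1 := by
      have := hhom (m : ℝ) (n : ℝ) 1 (Nat.cast_nonneg m) (Nat.cast_nonneg n) zero_le_one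
      push_cast
      rw [← this, mul_one]
    have h4 : u (n : ℝ) 1 = Aseq u (n + 1) - Aseq u n := by
      rw [hsym _ _ (Nat.cast_nonneg n) zero_le_one, Aseq_succ]; ring
    rw [h1, h2, h3, h4, ih]
    push_cast
    ring

include hnn in
lemma Aseq_mono : Monotone (Aseq u) := by
  apply monotone_nat_of_le_succ
  intro n
  rw [Aseq_succ]
  linarith [hnn 1 (n : ℝ) zero_le_one (Nat.cast_nonneg n)]

include hnn in
lemma Aseq_nonneg (n : ℕ) : 0 ≤ Aseq u n := by
  have := Aseq_mono u hnn (Nat.zero_le n)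
  rwa [Aseq_zero] at this

include hz hsym hco hhom in
lemma Aseq_pow2 (k : ℕ) :
    Aseq u (2 ^ k) = ((k : ℝ) * 2 ^ k) * (Aseq u 2 / 2) := by
  induction k with
  | zero =>
    simpa using Aseq_one u hz
  | succ k ih =>
    have h1 : (2 : ℕ) ^ (k + 1) = 2 * 2 ^ k := by ring
    rw [h1, Aseq_mult u hz hsym hhom hco 2 (2 ^ k), ih]
    push_cast
    ring

end keyU

section keyU2

variable (u : ℝ → ℝ → ℝ)
    (hnn : ∀ a b : ℝ, 0 ≤ a → 0 ≤ b → 0 ≤ u a b)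
    (hz : ∀ a : ℝ, 0 ≤ a → u a 0 = 0)
    (hsym : ∀ a b : ℝ, 0 ≤ a → 0 ≤ b → u a b = u b a)
    (hhom : ∀ lam a b : ℝ, 0 ≤ lam → 0 ≤ a → 0 ≤ b →
      u (lam * a) (lam * b) = lam * u a b)
    (hco : ∀ a b c : ℝ, 0 ≤ a → 0 ≤ b → 0 ≤ c →
      u (a + b) c + u a b = u a (b + c) + u b c)

include hnn hz hsym hhom hco in
lemma Aseq_bound (n : ℕ) (hn : 1 ≤ n) :
    Aseq u n ≤ ((Nat.log 2 n : ℝ) + 1) * n * Aseq u 2 := by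
  set k := Nat.log 2 n + 1 with hk
  have hA2 : 0 ≤ Aseq u 2 := Aseq_nonneg u hnn 2
  have h1 : n ≤ 2 ^ k := le_of_lt (Nat.lt_pow_succ_log_self (by norm_num) n)
  have h2 : 2 ^ k ≤ 2 * n := by
    rw [hk, pow_succ, mul_comm]
    exact Nat.mul_le_mul_left 2 (Nat.pow_log_le_self 2 (by omega))
  calc Aseq u n ≤ Aseq u (2 ^ k) := Aseq_mono u hnn h1
  _ = ((k : ℝ) * 2 ^ k) * (Aseq u 2 / 2) := Aseq_pow2 u hz hsym hhom hco k
  _ ≤ ((k : ℝ) * (2 * n)) * (Aseq u 2 / 2) := by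
      have h2' : ((2:ℝ) ^ k) ≤ 2 * n := by exact_mod_cast h2
      have hkpos : (0:ℝ) ≤ (k:ℝ) := Nat.cast_nonneg k
      gcongr
  _ = ((Nat.log 2 n : ℝ) + 1) * n * Aseq u 2 := by
      rw [hk]; push_cast; ring

end keyU2

section keyU3

variable (u : ℝ → ℝ → ℝ)
    (hnn : ∀ a b : ℝ, 0 ≤ a → 0 ≤ b → 0 ≤ u a b)
    (hz : ∀ a : ℝ, 0 ≤ a → u a 0 = 0)
    (hsym : ∀ a b : ℝ, 0 ≤ a → 0 ≤ b → u a b = u b a)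
    (hhom : ∀ lam a b : ℝ, 0 ≤ lam → 0 ≤ a → 0 ≤ b →
      u (lam * a) (lam * b) = lam * u a b)
    (hco : ∀ a b c : ℝ, 0 ≤ a → 0 ≤ b → 0 ≤ c →
      u (a + b) c + u a b = u a (b + c) + u b c)
    (hcont : ∀ (an bn : ℕ → ℝ) (a b : ℝ), (∀ n, 0 ≤ an n) → (∀ n, 0 ≤ bn n) →
      Tendsto an atTop (𝓝 a) → Tendsto bn atTop (𝓝 b) →
      Tendsto (fun n => u (an n) (bn n)) atTop (𝓝 (u a b)))

include hnn hz hsym hhom hco hcont in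
lemma key_u : ∀ a b : ℝ, 0 ≤ a → 0 ≤ b →
    u a b = u 1 1 / (2 * Real.log 2) * dL a b := by
  have hlog2 : (0:ℝ) < Real.log 2 := Real.log_pos (by norm_num)
  set c : ℝ := u 1 1 / (2 * Real.log 2) with hc
  set A : ℕ → ℝ := Aseq u with hA
  have hA2 : A 2 = u 1 1 := by
    rw [hA, show (2:ℕ) = 1 + 1 from rfl, Aseq_succ, Aseq_one u hz, Nat.cast_one, zero_add]
  have hA2nn : 0 ≤ A 2 := Aseq_nonneg u hnn 2
  have hu01 : u 0 1 = 0 := by rw [hsym 0 1 le_rfl zero_le_one, hz 1 zero_le_one]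
  -- ε_n := u (1/n) 1 → 0
  have hueps : Tendsto (fun n : ℕ => u (1 / (n:ℝ)) 1) atTop (𝓝 0) := by
    rw [← tendsto_add_atTop_iff_nat 1]
    have h1 : Tendsto (fun n : ℕ => 1 / ((n:ℝ) + 1)) atTop (𝓝 0) :=
      tendsto_one_div_add_atTop_nhds_zero_nat
    have h2 := hcont (fun n => 1 / ((n:ℝ) + 1)) (fun _ => 1) 0 1
      (fun n => by positivity) (fun _ => zero_le_one) h1 tendsto_const_nhds
    rw [hu01] at h2
    apply h2.congr
    intro n
    push_cast
    ring_nf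
  have hu1n : ∀ n : ℕ, 1 ≤ n → u 1 (n:ℝ) = (n:ℝ) * u (1 / (n:ℝ)) 1 := by
    intro n hn
    have hn0 : (n:ℝ) ≠ 0 := by positivity
    have := hhom (n:ℝ) (1 / (n:ℝ)) 1 (Nat.cast_nonneg n) (by positivity) zero_le_one
    rw [mul_one_div, div_self hn0, mul_one] at this
    exact this
  set β : ℕ → ℝ := fun n => A n / (n:ℝ) - c * Real.log n with hβ
  have hβmul : ∀ m n, 1 ≤ m → 1 ≤ n → β (m * n) = β m + β n := by
    intro m n hm hn
    have hm0 : ((m:ℕ):ℝ) ≠ 0 := by positivity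
    have hn0 : ((n:ℕ):ℝ) ≠ 0 := by positivity
    have hmul := Aseq_mult u hz hsym hhom hco m n
    rw [hβ]
    simp only
    rw [← hA] at hmul
    push_cast
    rw [hmul, Real.log_mul hm0 hn0]
    field_simp
    ring
  have hβ2 : β 2 = 0 := by
    rw [hβ]
    simp only
    rw [hA2, hc]
    push_cast
    field_simp
    ring
  have hβΔ : Tendsto (fun n => β (n + 1) - β n) atTop (𝓝 0) := by
    have hlogn : Tendsto (fun n : ℕ => Real.log n / (n:ℝ)) atTop (𝓝 0) :=
      (Real.isLittleO_log_id_atTop.tendsto_div_nhds_zero).comp tendsto_natCast_atTop_atTop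
    have hlogn1 : Tendsto (fun n : ℕ => Real.log n / ((n:ℝ) + 1)) atTop (𝓝 0) := by
      apply tendsto_of_tendsto_of_tendsto_of_le_of_le' tendsto_const_nhds hlogn
      · filter_upwards [Ici_mem_atTop 1] with n hn
        have : (1:ℝ) ≤ (n:ℝ) := by exact_mod_cast hn
        have := Real.log_nonneg this
        positivity
      · filter_upwards [Ici_mem_atTop 1] with n hn
        have h1 : (1:ℝ) ≤ (n:ℝ) := by exact_mod_cast hn
        have h2 := Real.log_nonneg h1
        apply div_le_div_of_nonneg_left h2 (by linarith) (by linarith)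
    -- T1
    have T1 : Tendsto (fun n : ℕ => u 1 (n:ℝ) / ((n:ℝ) + 1)) atTop (𝓝 0) := by
      apply tendsto_of_tendsto_of_tendsto_of_le_of_le' tendsto_const_nhds hueps
      · filter_upwards [Ici_mem_atTop 1] with n hn
        have h1 : (0:ℝ) ≤ u 1 (n:ℝ) := hnn 1 _ zero_le_one (Nat.cast_nonneg n)
        positivity
      · filter_upwards [Ici_mem_atTop 1] with n hn
        have hn1 : (1:ℝ) ≤ (n:ℝ) := by exact_mod_cast hn
        have heps : 0 ≤ u (1 / (n:ℝ)) 1 := hnn _ _ (by positivity) zero_le_one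
        rw [hu1n n hn]
        rw [div_le_iff₀ (by linarith)]
        nlinarith
    -- T2
    have T2 : Tendsto (fun n : ℕ => A n / ((n:ℝ) * ((n:ℝ) + 1))) atTop (𝓝 0) := by
      have hbd : Tendsto (fun n : ℕ =>
          (Real.log n / Real.log 2 + 1) * A 2 / ((n:ℝ) + 1)) atTop (𝓝 0) := by
        have step : Tendsto (fun n : ℕ =>
            (Real.log n / ((n:ℝ)+1)) * (A 2 / Real.log 2) + A 2 * (1 / ((n:ℝ)+1)))
            atTop (𝓝 (0 * (A 2 / Real.log 2) + A 2 * 0)) :=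
          (hlogn1.mul_const _).add (tendsto_one_div_add_atTop_nhds_zero_nat.const_mul _)
        rw [zero_mul, mul_zero, add_zero] at step
        apply step.congr
        intro n
        field_simp
      apply tendsto_of_tendsto_of_tendsto_of_le_of_le' tendsto_const_nhds hbd
      · filter_upwards [Ici_mem_atTop 1] with n hn
        have hn1 : (1:ℝ) ≤ (n:ℝ) := by exact_mod_cast hn
        have h1 : 0 ≤ A n := Aseq_nonneg u hnn n
        positivity
      · filter_upwards [Ici_mem_atTop 1] with n hn
        have hn1 : (1:ℝ) ≤ (n:ℝ) := by exact_mod_cast hn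
        have hAb := Aseq_bound u hnn hz hsym hhom hco n hn
        rw [← hA] at hAb
        have hlogle : ((Nat.log 2 n : ℕ):ℝ) ≤ Real.log n / Real.log 2 := by
          rw [le_div_iff₀ hlog2]
          have h2 : (2:ℝ) ^ (Nat.log 2 n) ≤ (n:ℝ) := by
            exact_mod_cast Nat.pow_log_le_self 2 (Nat.one_le_iff_ne_zero.1 hn)
          calc ((Nat.log 2 n : ℕ):ℝ) * Real.log 2 = Real.log ((2:ℝ) ^ (Nat.log 2 n)) :=
                (Real.log_pow _ _).symm
          _ ≤ Real.log n := Real.log_le_log (by positivity) h2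
        have hstep1 : A n / ((n:ℝ) * ((n:ℝ) + 1))
            ≤ (((Nat.log 2 n : ℕ):ℝ) + 1) * A 2 / ((n:ℝ) + 1) := by
          rw [div_le_div_iff₀ (by nlinarith) (by linarith)]
          calc A n * ((n:ℝ) + 1) ≤ (((Nat.log 2 n:ℕ):ℝ) + 1) * (n:ℝ) * A 2 * ((n:ℝ)+1) := by
                have hp : (0:ℝ) < (n:ℝ) + 1 := by linarith
                exact mul_le_mul_of_nonneg_right hAb (le_of_lt hp)
          _ = (((Nat.log 2 n:ℕ):ℝ) + 1) * A 2 * ((n:ℝ) * ((n:ℝ)+1)) := by ring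
        refine le_trans hstep1 ?_
        apply div_le_div_of_nonneg_right ?_ (by linarith)
        · exact mul_le_mul_of_nonneg_right (by linarith) hA2nn
    -- T3
    have T3 : Tendsto (fun n : ℕ => Real.log (((n:ℝ) + 1) / (n:ℝ))) atTop (𝓝 0) := by
      have h1 : Tendsto (fun n : ℕ => 1 + 1 / ((n:ℝ))) atTop (𝓝 1) := by
        have h0 := tendsto_one_div_atTop_nhds_zero_nat (𝕜 := ℝ)
        have h2 := (tendsto_const_nhds : Tendsto (fun _ : ℕ => (1:ℝ)) atTop (𝓝 1)).add h0
        rwa [add_zero] at h2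
      have h2 : Tendsto (fun n : ℕ => Real.log (1 + 1 / (n:ℝ))) atTop (𝓝 0) := by
        have := ((Real.continuousAt_log one_ne_zero).tendsto.comp h1)
        rwa [Real.log_one] at this
      apply h2.congr'
      filter_upwards [Ici_mem_atTop 1] with n hn
      have hn0 : ((n:ℕ):ℝ) ≠ 0 := by
        have : (1:ℝ) ≤ (n:ℝ) := by exact_mod_cast hn
        linarith
      rw [add_div, div_self hn0]
    have comb : Tendsto (fun n : ℕ => u 1 (n:ℝ) / ((n:ℝ) + 1)
        - A n / ((n:ℝ) * ((n:ℝ) + 1)) - c * Real.log (((n:ℝ) + 1) / (n:ℝ)))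
        atTop (𝓝 0) := by
      have := (T1.sub T2).sub (T3.const_mul c)
      simpa using this
    apply comb.congr'
    filter_upwards [Ici_mem_atTop 1] with n hn
    have hn1 : (1:ℝ) ≤ (n:ℝ) := by exact_mod_cast hn
    have hn0 : ((n:ℕ):ℝ) ≠ 0 := by linarith
    have hn10 : ((n:ℝ) + 1) ≠ 0 := by linarith
    have hAsucc : A (n + 1) = A n + u 1 (n:ℝ) := Aseq_succ u n
    rw [hβ]
    simp only
    rw [hAsucc, Real.log_div hn10 hn0]
    push_cast
    field_simp
    ring
  have hβ0 := addmul_null β hβmul hβ2 hβΔ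
  have hAval : ∀ n : ℕ, A n = c * (n:ℝ) * Real.log n := by
    intro n
    rcases Nat.eq_zero_or_pos n with h0 | h1
    · rw [h0]; simp [hA, Aseq_zero]
    · have := hβ0 n h1
      rw [hβ] at this
      simp only at this
      have hn0 : ((n:ℕ):ℝ) ≠ 0 := by positivity
      field_simp at this
      linarith [this]
  have huklv : ∀ k l : ℕ, u (k:ℝ) (l:ℝ) = c * dL (k:ℝ) (l:ℝ) := by
    intro k l
    have h1 := u_nat u hz hsym hco k l
    rw [← hA] at h1
    rw [h1, hAval (k + l), hAval k, hAval l]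
    unfold dL
    push_cast
    ring
  have hscale : ∀ lam : ℝ, 0 ≤ lam → ∀ k l : ℕ,
      u (lam * k) (lam * l) = c * dL (lam * k) (lam * l) := by
    intro lam hlam k l
    rw [hhom lam (k:ℝ) (l:ℝ) hlam (Nat.cast_nonneg k) (Nat.cast_nonneg l), huklv,
      dL_scale hlam _ _ (Nat.cast_nonneg k) (Nat.cast_nonneg l)]
    ring
  intro a b ha hb
  rcases eq_or_lt_of_le ha with ha0 | ha'
  · rw [← ha0, hsym 0 b le_rfl hb, hz b hb]
    have : dL 0 b = 0 := by unfold dL; simp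
    rw [this, mul_zero]
  rcases eq_or_lt_of_le hb with hb0 | hb'
  · rw [← hb0, hz a ha]
    have : dL a 0 = 0 := by unfold dL; simp
    rw [this, mul_zero]
  -- a > 0, b > 0
  set l : ℕ → ℕ := fun n => ⌊((n:ℝ) + 1) * b / a⌋₊ with hl
  set bn : ℕ → ℝ := fun n => a * (l n : ℝ) / ((n:ℝ) + 1) with hbn
  have hbn_nn : ∀ n, 0 ≤ bn n := by
    intro n; rw [hbn]; positivity
  have hrepr : ∀ n : ℕ, u a (bn n) = c * dL a (bn n) := by
    intro n
    have hn10 : ((n:ℝ) + 1) ≠ 0 := by positivity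
    have hlam : (0:ℝ) ≤ a / ((n:ℝ) + 1) := by positivity
    have h1 : a / ((n:ℝ) + 1) * ((n + 1 : ℕ):ℝ) = a := by
      push_cast; field_simp
    have h2 : a / ((n:ℝ) + 1) * ((l n : ℕ):ℝ) = bn n := by
      rw [hbn]; simp only; ring
    have := hscale (a / ((n:ℝ) + 1)) hlam (n + 1) (l n)
    rwa [h1, h2] at this
  have hbnlim : Tendsto bn atTop (𝓝 b) := by
    have hupper : ∀ n : ℕ, bn n ≤ b := by
      intro n
      have hn1 : (0:ℝ) < (n:ℝ) + 1 := by positivity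
      rw [hbn]
      simp only
      rw [div_le_iff₀ hn1]
      have hfl : ((l n : ℕ):ℝ) ≤ ((n:ℝ) + 1) * b / a := Nat.floor_le (by positivity)
      calc a * ((l n : ℕ):ℝ) ≤ a * (((n:ℝ) + 1) * b / a) :=
            mul_le_mul_of_nonneg_left hfl (le_of_lt ha')
      _ = b * ((n:ℝ) + 1) := by field_simp
    have hlower : ∀ n : ℕ, b - a / ((n:ℝ) + 1) ≤ bn n := by
      intro n
      have hn1 : (0:ℝ) < (n:ℝ) + 1 := by positivity
      have hfl : ((n:ℝ) + 1) * b / a - 1 < ((l n : ℕ):ℝ) := Nat.sub_one_lt_floor _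
      have h2 : b * ((n:ℝ) + 1) - a < a * ((l n : ℕ):ℝ) := by
        have h3 := mul_lt_mul_of_pos_left hfl ha'
        calc b * ((n:ℝ)+1) - a = a * (((n:ℝ)+1) * b / a - 1) := by field_simp
        _ < a * ((l n : ℕ):ℝ) := h3
      rw [hbn]
      simp only
      rw [le_div_iff₀ hn1]
      have h3 : (b - a / ((n:ℝ)+1)) * ((n:ℝ)+1) = b * ((n:ℝ)+1) - a := by
        field_simp
      rw [h3]
      linarith
    have hglim : Tendsto (fun n : ℕ => b - a / ((n:ℝ)+1)) atTop (𝓝 b) := by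
      have h0 := tendsto_one_div_add_atTop_nhds_zero_nat.const_mul a
      have h2 := (tendsto_const_nhds : Tendsto (fun _ : ℕ => b) atTop (𝓝 b)).sub h0
      rw [mul_zero, sub_zero] at h2
      apply h2.congr
      intro n
      rw [mul_one_div]
    exact tendsto_of_tendsto_of_tendsto_of_le_of_le hglim tendsto_const_nhds hlower hupper
  have hL := hcont (fun _ => a) bn a b (fun _ => ha) hbn_nn tendsto_const_nhds hbnlim
  have hdc : Continuous fun t : ℝ => dL a t := by
    unfold dL
    exact ((Real.continuous_mul_log.comp (continuous_const.add continuous_id)).sub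
      continuous_const).sub Real.continuous_mul_log
  have hR : Tendsto (fun n => c * dL a (bn n)) atTop (𝓝 (c * dL a b)) :=
    ((hdc.tendsto b).comp hbnlim).const_mul c
  have hL' : Tendsto (fun n => c * dL a (bn n)) atTop (𝓝 (u a b)) :=
    hL.congr (fun n => hrepr n)
  exact tendsto_nhds_unique hL' hR

end keyU3



-- basic IsMP lemmas
lemma mp_id {X : Type} [Fintype X] (p : X → ℝ) : IsMP p p id := by
  intro j; simp [Finset.sum_ite_eq']

lemma mp_toUnit {X : Type} [Fintype X] (p : X → ℝ) :
    IsMP p (fun _ : PUnit => ∑ i, p i) (fun _ => PUnit.unit) := by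
  intro j; simp

lemma mp_total {X Y : Type} [Fintype X] [Fintype Y] {p : X → ℝ} {q : Y → ℝ} {f : X → Y}
    (hf : IsMP p q f) : ∑ j, q j = ∑ i, p i := by
  rw [show (∑ j, q j) = ∑ j, ∑ i, if f i = j then p i else 0 from
    Finset.sum_congr rfl (fun j _ => hf j)]
  rw [Finset.sum_comm]
  congr 1
  funext i
  simp [Finset.sum_ite_eq]

lemma meas_of_mp {X Y : Type} [Fintype X] [Fintype Y] {p : X → ℝ} {q : Y → ℝ} {f : X → Y}
    (hp : IsMeas p) (hf : IsMP p q f) : IsMeas q := by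
  intro j
  rw [hf j]
  refine Finset.sum_nonneg fun i _ => ?_
  split
  · exact hp i
  · exact le_rfl

lemma sum_filter_equiv {X Y : Type} [Fintype X] [Fintype Y] (e : X ≃ Y) (p : X → ℝ) (j : Y) :
    (∑ i, if e i = j then p i else 0) = p (e.symm j) := by
  rw [← Equiv.sum_comp e.symm (fun i => if e i = j then p i else 0)]
  simp [Finset.sum_ite_eq']

lemma mp_equiv_val {X Y : Type} [Fintype X] [Fintype Y] {p : X → ℝ} {q : Y → ℝ} {e : X ≃ Y}
    (hf : IsMP p q ⇑e) : ∀ j, q j = p (e.symm j) := by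
  intro j; rw [hf j, sum_filter_equiv]

lemma mp_of_equiv_val {X Y : Type} [Fintype X] [Fintype Y] {p : X → ℝ} {q : Y → ℝ} (e : X ≃ Y)
    (h : ∀ j, q j = p (e.symm j)) : IsMP p q ⇑e := by
  intro j; rw [sum_filter_equiv e p j]; exact h j

lemma mp_equiv_symm {X Y : Type} [Fintype X] [Fintype Y] {p : X → ℝ} {q : Y → ℝ} {e : X ≃ Y}
    (hf : IsMP p q ⇑e) : IsMP q p ⇑e.symm := by
  apply mp_of_equiv_val
  intro i
  rw [mp_equiv_val hf]
  simp

lemma mp_sum_map {X X' Y Y' : Type} [Fintype X] [Fintype X'] [Fintype Y] [Fintype Y']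
    {p : X → ℝ} {p' : X' → ℝ} {q : Y → ℝ} {q' : Y' → ℝ} {f : X → X'} {g : Y → Y'}
    (hf : IsMP p p' f) (hg : IsMP q q' g) :
    IsMP (dsum p q) (dsum p' q') (Sum.map f g) := by
  rintro (j | j)
  · simp only [dsum, Sum.elim_inl, Fintype.sum_sum_type]
    rw [hf j]
    simp
  · simp only [dsum, Sum.elim_inr, Fintype.sum_sum_type]
    rw [hg j]
    simp

section Fmach

variable (F : ∀ {X Y : Type} [Fintype X] [Fintype Y], (X → ℝ) → (Y → ℝ) → (X → Y) → ℝ)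

noncomputable def GG {X : Type} [Fintype X] (p : X → ℝ) : ℝ :=
  F p (fun _ : PUnit => ∑ i, p i) (fun _ => PUnit.unit)

variable
    (hnn : ∀ {X Y : Type} [Fintype X] [Fintype Y] (p : X → ℝ) (q : Y → ℝ) (f : X → Y),
      IsMeas p → IsMeas q → IsMP p q f → 0 ≤ F p q f)
    (hfunc : ∀ {X Y Z : Type} [Fintype X] [Fintype Y] [Fintype Z]
      (p : X → ℝ) (q : Y → ℝ) (r : Z → ℝ) (g : X → Y) (f : Y → Z),
      IsMeas p → IsMeas q → IsMeas r → IsMP p q g → IsMP q r f →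
      F p r (f ∘ g) = F q r f + F p q g)
    (hadd : ∀ {X X' Y Y' : Type} [Fintype X] [Fintype X'] [Fintype Y] [Fintype Y']
      (p : X → ℝ) (p' : X' → ℝ) (q : Y → ℝ) (q' : Y' → ℝ) (f : X → X') (g : Y → Y'),
      IsMeas p → IsMeas p' → IsMeas q → IsMeas q' → IsMP p p' f → IsMP q q' g →
      F (dsum p q) (dsum p' q') (Sum.map f g) = F p p' f + F q q' g)
    (hhom : ∀ {X Y : Type} [Fintype X] [Fintype Y] (p : X → ℝ) (q : Y → ℝ) (f : X → Y)
      (lam : ℝ), 0 ≤ lam → IsMeas p → IsMeas q → IsMP p q f →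
      F (fun i => lam * p i) (fun j => lam * q j) f = lam * F p q f)

include hfunc in
lemma F_id {X : Type} [Fintype X] (p : X → ℝ) (hp : IsMeas p) : F p p id = 0 := by
  have h := hfunc p p p id id hp hp hp (mp_id p) (mp_id p)
  simp only [Function.comp_id] at h
  linarith

lemma meas_sumMass {X : Type} [Fintype X] {p : X → ℝ} (hp : IsMeas p) :
    IsMeas (fun _ : PUnit => ∑ i, p i) :=
  fun _ => Finset.sum_nonneg fun i _ => hp i

include hfunc in
lemma F_sub {X Y : Type} [Fintype X] [Fintype Y] (p : X → ℝ) (q : Y → ℝ) (f : X → Y)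
    (hp : IsMeas p) (hq : IsMeas q) (hf : IsMP p q f) :
    GG F p = GG F q + F p q f := by
  have h := hfunc p q (fun _ : PUnit => ∑ j, q j) f (fun _ => PUnit.unit)
    hp hq (meas_sumMass hq) hf (mp_toUnit q)
  have hmass : (fun _ : PUnit => ∑ j, q j) = (fun _ : PUnit => ∑ i, p i) := by
    funext _; exact mp_total hf
  nth_rewrite 1 [hmass] at h
  have h' : GG F p = GG F q + F p q f := h
  exact h'

include hnn in
lemma G_nonneg {X : Type} [Fintype X] (p : X → ℝ) (hp : IsMeas p) : 0 ≤ GG F p :=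
  hnn p _ _ hp (meas_sumMass hp) (mp_toUnit p)

include hnn hfunc in
lemma G_equiv {X Y : Type} [Fintype X] [Fintype Y] (p : X → ℝ) (q : Y → ℝ) (e : X ≃ Y)
    (hp : IsMeas p) (hf : IsMP p q ⇑e) : GG F p = GG F q := by
  have hq : IsMeas q := meas_of_mp hp hf
  have h1 := hfunc q p q (⇑e.symm) (⇑e) hq hp hq (mp_equiv_symm hf) hf
  have h2 : ⇑e ∘ ⇑e.symm = (id : Y → Y) := by
    funext j; simp
  rw [h2, F_id F hfunc q hq] at h1
  have h3 : 0 ≤ F p q ⇑e := hnn _ _ _ hp hq hf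
  have h4 : 0 ≤ F q p ⇑e.symm := hnn _ _ _ hq hp (mp_equiv_symm hf)
  have h5 : F p q ⇑e = 0 := by linarith
  have h6 : GG F p = GG F q + F p q ⇑e := F_sub F hfunc p q (⇑e) hp hq hf
  rw [h5] at h6
  linarith

lemma punit_fun_id : (fun _ : PUnit => PUnit.unit) = (id : PUnit → PUnit) := by
  funext x; cases x; rfl

include hfunc in
lemma G_pt (a : ℝ) (ha : 0 ≤ a) : GG F (fun _ : PUnit => a) = 0 := by
  unfold GG
  have h1 : (fun _ : PUnit => ∑ _i : PUnit, a) = (fun _ : PUnit => a) := by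
    funext _; simp
  rw [h1, punit_fun_id]
  exact F_id F hfunc _ (fun _ => ha)

include hhom in
lemma G_scale {X : Type} [Fintype X] (p : X → ℝ) (lam : ℝ) (hlam : 0 ≤ lam)
    (hp : IsMeas p) : GG F (fun i => lam * p i) = lam * GG F p := by
  have h := hhom p (fun _ : PUnit => ∑ i, p i) (fun _ => PUnit.unit) lam hlam hp
    (meas_sumMass hp) (mp_toUnit p)
  unfold GG
  have h1 : (fun _ : PUnit => ∑ i, lam * p i) = (fun _ : PUnit => lam * ∑ i, p i) := by
    funext _; rw [Finset.mul_sum]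
  rw [h1]
  exact h

include hhom in
lemma G_empty {X : Type} [Fintype X] [IsEmpty X] (p : X → ℝ) : GG F p = 0 := by
  have hp : IsMeas p := fun i => isEmptyElim i
  have h := G_scale F hhom p 0 le_rfl hp
  have h1 : (fun i => (0:ℝ) * p i) = p := by
    funext i; exact isEmptyElim i
  rw [h1, zero_mul] at h
  exact h

include hfunc hadd in
lemma G_dsum {X Y : Type} [Fintype X] [Fintype Y] (p : X → ℝ) (q : Y → ℝ)
    (hp : IsMeas p) (hq : IsMeas q) :
    GG F (dsum p q) = GG F (dsum (fun _ : PUnit => ∑ i, p i) (fun _ : PUnit => ∑ j, q j))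
      + GG F p + GG F q := by
  set smp : PUnit → ℝ := fun _ => ∑ i, p i with hsmp
  set smq : PUnit → ℝ := fun _ => ∑ j, q j with hsmq
  have hmeas1 : IsMeas (dsum p q) := by rintro (i | i) <;> [exact hp i; exact hq i]
  have hmeas2 : IsMeas (dsum smp smq) := by
    rintro (i | i) <;> [exact meas_sumMass hp i; exact meas_sumMass hq i]
  have hmp1 : IsMP (dsum p q) (dsum smp smq) (Sum.map (fun _ => PUnit.unit) (fun _ => PUnit.unit)) :=
    mp_sum_map (mp_toUnit p) (mp_toUnit q)
  have hA := hadd p smp q smq (fun _ => PUnit.unit) (fun _ => PUnit.unit)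
    hp (meas_sumMass hp) hq (meas_sumMass hq) (mp_toUnit p) (mp_toUnit q)
  have hF := hfunc (dsum p q) (dsum smp smq) (fun _ : PUnit => ∑ k, dsum smp smq k)
    (Sum.map (fun _ => PUnit.unit) (fun _ => PUnit.unit)) (fun _ => PUnit.unit)
    hmeas1 hmeas2 (meas_sumMass hmeas2) hmp1 (mp_toUnit (dsum smp smq))
  have hc : ((fun _ : PUnit ⊕ PUnit => PUnit.unit) ∘
      (Sum.map (fun _ : X => PUnit.unit) (fun _ : Y => PUnit.unit))) =
      (fun _ : X ⊕ Y => PUnit.unit) := rfl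
  rw [hc] at hF
  have hmass : (fun _ : PUnit => ∑ k, dsum smp smq k) = (fun _ : PUnit => ∑ k, dsum p q k) := by
    funext _
    simp [dsum, Fintype.sum_sum_type, hsmp, hsmq]
  nth_rewrite 1 [hmass] at hF
  have hF' : GG F (dsum p q) = GG F (dsum smp smq)
      + F (dsum p q) (dsum smp smq)
        (Sum.map (fun _ : X => PUnit.unit) (fun _ : Y => PUnit.unit)) := hF
  have hA' : F (dsum p q) (dsum smp smq)
      (Sum.map (fun _ : X => PUnit.unit) (fun _ : Y => PUnit.unit))
      = GG F p + GG F q := hA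
  rw [hF', hA']
  ring

end Fmach

section Fmach2

variable (F : ∀ {X Y : Type} [Fintype X] [Fintype Y], (X → ℝ) → (Y → ℝ) → (X → Y) → ℝ)

noncomputable def uF (a b : ℝ) : ℝ :=
  GG F (dsum (fun _ : PUnit => a) (fun _ : PUnit => b))

variable
    (hnn : ∀ {X Y : Type} [Fintype X] [Fintype Y] (p : X → ℝ) (q : Y → ℝ) (f : X → Y),
      IsMeas p → IsMeas q → IsMP p q f → 0 ≤ F p q f)
    (hfunc : ∀ {X Y Z : Type} [Fintype X] [Fintype Y] [Fintype Z]
      (p : X → ℝ) (q : Y → ℝ) (r : Z → ℝ) (g : X → Y) (f : Y → Z),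
      IsMeas p → IsMeas q → IsMeas r → IsMP p q g → IsMP q r f →
      F p r (f ∘ g) = F q r f + F p q g)
    (hadd : ∀ {X X' Y Y' : Type} [Fintype X] [Fintype X'] [Fintype Y] [Fintype Y']
      (p : X → ℝ) (p' : X' → ℝ) (q : Y → ℝ) (q' : Y' → ℝ) (f : X → X') (g : Y → Y'),
      IsMeas p → IsMeas p' → IsMeas q → IsMeas q' → IsMP p p' f → IsMP q q' g →
      F (dsum p q) (dsum p' q') (Sum.map f g) = F p p' f + F q q' g)
    (hhom : ∀ {X Y : Type} [Fintype X] [Fintype Y] (p : X → ℝ) (q : Y → ℝ) (f : X → Y)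
      (lam : ℝ), 0 ≤ lam → IsMeas p → IsMeas q → IsMP p q f →
      F (fun i => lam * p i) (fun j => lam * q j) f = lam * F p q f)
    (hcont : ∀ {X Y : Type} [Fintype X] [Fintype Y]
      (pn : ℕ → X → ℝ) (qn : ℕ → Y → ℝ) (fn : ℕ → X → Y)
      (p : X → ℝ) (q : Y → ℝ) (f : X → Y),
      (∀ n, IsMeas (pn n)) → (∀ n, IsMeas (qn n)) → (∀ n, IsMP (pn n) (qn n) (fn n)) →
      IsMeas p → IsMeas q → IsMP p q f →
      (∀ᶠ n in Filter.atTop, fn n = f) →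
      (∀ i, Filter.Tendsto (fun n => pn n i) Filter.atTop (nhds (p i))) →
      (∀ j, Filter.Tendsto (fun n => qn n j) Filter.atTop (nhds (q j))) →
      Filter.Tendsto (fun n => F (pn n) (qn n) (fn n)) Filter.atTop (nhds (F p q f)))

lemma meas_pair {a b : ℝ} (ha : 0 ≤ a) (hb : 0 ≤ b) :
    IsMeas (dsum (fun _ : PUnit => a) (fun _ : PUnit => b)) := by
  rintro (i | i) <;> [exact ha; exact hb]

include hnn in
lemma uF_nonneg (a b : ℝ) (ha : 0 ≤ a) (hb : 0 ≤ b) : 0 ≤ uF F a b :=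
  G_nonneg F hnn _ (meas_pair ha hb)

include hnn hfunc in
lemma uF_zero (a : ℝ) (ha : 0 ≤ a) : uF F a 0 = 0 := by
  set p2 : PUnit ⊕ PUnit → ℝ := dsum (fun _ : PUnit => a) (fun _ : PUnit => (0:ℝ)) with hp2
  have hs : IsMP (fun _ : PUnit => a) p2 (Sum.inl : PUnit → PUnit ⊕ PUnit) := by
    rintro (j | j)
    · simp [hp2, dsum]
    · simp [hp2, dsum]
  have hmeas2 : IsMeas p2 := meas_pair ha le_rfl
  have h := hfunc (fun _ : PUnit => a) p2 (fun _ : PUnit => ∑ k, p2 k)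
    (Sum.inl : PUnit → PUnit ⊕ PUnit) (fun _ => PUnit.unit)
    (fun _ => ha) hmeas2 (meas_sumMass hmeas2) hs (mp_toUnit p2)
  have hc : ((fun _ : PUnit ⊕ PUnit => PUnit.unit) ∘ (Sum.inl : PUnit → PUnit ⊕ PUnit))
      = (fun _ : PUnit => PUnit.unit) := rfl
  rw [hc] at h
  have hmass : (fun _ : PUnit => ∑ k, p2 k) = (fun _ : PUnit => ∑ _i : PUnit, a) := by
    funext _
    simp [hp2, dsum, Fintype.sum_sum_type]
  nth_rewrite 1 [hmass] at h
  have h' : GG F (fun _ : PUnit => a) = uF F a 0 + F (fun _ : PUnit => a) p2 Sum.inl := h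
  rw [G_pt F hfunc a ha] at h'
  have h1 : 0 ≤ uF F a 0 := uF_nonneg F hnn a 0 ha le_rfl
  have h2 : 0 ≤ F (fun _ : PUnit => a) p2 Sum.inl := hnn _ _ _ (fun _ => ha) hmeas2 hs
  linarith

include hnn hfunc in
lemma uF_sym (a b : ℝ) (ha : 0 ≤ a) (hb : 0 ≤ b) : uF F a b = uF F b a := by
  apply G_equiv F hnn hfunc _ _ (Equiv.sumComm PUnit PUnit) (meas_pair ha hb)
  apply mp_of_equiv_val
  rintro (j | j) <;> rfl

include hhom in
lemma uF_hom (lam a b : ℝ) (hlam : 0 ≤ lam) (ha : 0 ≤ a) (hb : 0 ≤ b) :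
    uF F (lam * a) (lam * b) = lam * uF F a b := by
  have h := G_scale F hhom (dsum (fun _ : PUnit => a) (fun _ : PUnit => b)) lam hlam
    (meas_pair ha hb)
  have h1 : (fun i => lam * (dsum (fun _ : PUnit => a) (fun _ : PUnit => b)) i)
      = dsum (fun _ : PUnit => lam * a) (fun _ : PUnit => lam * b) := by
    funext i; cases i <;> rfl
  rw [h1] at h
  exact h

end Fmach2

section Fmach3

variable (F : ∀ {X Y : Type} [Fintype X] [Fintype Y], (X → ℝ) → (Y → ℝ) → (X → Y) → ℝ)
variable
    (hnn : ∀ {X Y : Type} [Fintype X] [Fintype Y] (p : X → ℝ) (q : Y → ℝ) (f : X → Y),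
      IsMeas p → IsMeas q → IsMP p q f → 0 ≤ F p q f)
    (hfunc : ∀ {X Y Z : Type} [Fintype X] [Fintype Y] [Fintype Z]
      (p : X → ℝ) (q : Y → ℝ) (r : Z → ℝ) (g : X → Y) (f : Y → Z),
      IsMeas p → IsMeas q → IsMeas r → IsMP p q g → IsMP q r f →
      F p r (f ∘ g) = F q r f + F p q g)
    (hadd : ∀ {X X' Y Y' : Type} [Fintype X] [Fintype X'] [Fintype Y] [Fintype Y']
      (p : X → ℝ) (p' : X' → ℝ) (q : Y → ℝ) (q' : Y' → ℝ) (f : X → X') (g : Y → Y'),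
      IsMeas p → IsMeas p' → IsMeas q → IsMeas q' → IsMP p p' f → IsMP q q' g →
      F (dsum p q) (dsum p' q') (Sum.map f g) = F p p' f + F q q' g)
    (hcont : ∀ {X Y : Type} [Fintype X] [Fintype Y]
      (pn : ℕ → X → ℝ) (qn : ℕ → Y → ℝ) (fn : ℕ → X → Y)
      (p : X → ℝ) (q : Y → ℝ) (f : X → Y),
      (∀ n, IsMeas (pn n)) → (∀ n, IsMeas (qn n)) → (∀ n, IsMP (pn n) (qn n) (fn n)) →
      IsMeas p → IsMeas q → IsMP p q f →
      (∀ᶠ n in Filter.atTop, fn n = f) →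
      (∀ i, Filter.Tendsto (fun n => pn n i) Filter.atTop (nhds (p i))) →
      (∀ j, Filter.Tendsto (fun n => qn n j) Filter.atTop (nhds (q j))) →
      Filter.Tendsto (fun n => F (pn n) (qn n) (fn n)) Filter.atTop (nhds (F p q f)))

include hnn hfunc hadd in
lemma uF_co (a b c : ℝ) (ha : 0 ≤ a) (hb : 0 ≤ b) (hc : 0 ≤ c) :
    uF F (a + b) c + uF F a b = uF F a (b + c) + uF F b c := by
  set ca : PUnit → ℝ := fun _ => a with hca
  set cb : PUnit → ℝ := fun _ => b with hcb
  set cc : PUnit → ℝ := fun _ => c with hcc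
  have hab : IsMeas (dsum ca cb) := meas_pair ha hb
  have hbc : IsMeas (dsum cb cc) := meas_pair hb hc
  have e1 : (fun _ : PUnit => ∑ i, dsum ca cb i) = (fun _ : PUnit => a + b) := by
    funext _; simp [dsum, Fintype.sum_sum_type, hca, hcb]
  have e2 : (fun _ : PUnit => ∑ j, cc j) = cc := by
    funext _; simp [hcc]
  have e3 : (fun _ : PUnit => ∑ i, ca i) = ca := by
    funext _; simp [hca]
  have e4 : (fun _ : PUnit => ∑ j, dsum cb cc j) = (fun _ : PUnit => b + c) := by
    funext _; simp [dsum, Fintype.sum_sum_type, hcb, hcc]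
  have h1 : GG F (dsum (dsum ca cb) cc) = uF F (a + b) c + uF F a b := by
    have h := G_dsum F hfunc hadd (dsum ca cb) cc hab (fun _ => hc)
    rw [e1, e2, G_pt F hfunc c hc] at h
    have h' : GG F (dsum (dsum ca cb) cc)
        = GG F (dsum (fun _ : PUnit => a + b) cc) + GG F (dsum ca cb) + 0 := h
    have hx : GG F (dsum (fun _ : PUnit => a + b) cc) = uF F (a + b) c := rfl
    have hy : GG F (dsum ca cb) = uF F a b := rfl
    rw [h', hx, hy]
    ring
  have h2 : GG F (dsum ca (dsum cb cc)) = uF F a (b + c) + uF F b c := by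
    have h := G_dsum F hfunc hadd ca (dsum cb cc) (fun _ => ha) hbc
    rw [e3, e4, G_pt F hfunc a ha] at h
    have h' : GG F (dsum ca (dsum cb cc))
        = GG F (dsum ca (fun _ : PUnit => b + c)) + 0 + GG F (dsum cb cc) := h
    have hx : GG F (dsum ca (fun _ : PUnit => b + c)) = uF F a (b + c) := rfl
    have hy : GG F (dsum cb cc) = uF F b c := rfl
    rw [h', hx, hy]
    ring
  have h3 : GG F (dsum (dsum ca cb) cc) = GG F (dsum ca (dsum cb cc)) := by
    refine G_equiv F hnn hfunc _ _ (Equiv.sumAssoc PUnit PUnit PUnit)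
      (by rintro ((i | i) | i) <;> [exact ha; exact hb; exact hc]) ?_
    apply mp_of_equiv_val
    rintro (j | (j | j)) <;> rfl
  rw [h1, h2] at h3
  linarith

include hcont in
lemma uF_cont (an bn : ℕ → ℝ) (a b : ℝ) (hann : ∀ n, 0 ≤ an n) (hbnn : ∀ n, 0 ≤ bn n)
    (hal : Filter.Tendsto an Filter.atTop (nhds a))
    (hbl : Filter.Tendsto bn Filter.atTop (nhds b)) :
    Filter.Tendsto (fun n => uF F (an n) (bn n)) Filter.atTop (nhds (uF F a b)) := by
  have ha : 0 ≤ a := ge_of_tendsto hal (Filter.Eventually.of_forall hann)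
  have hb : 0 ≤ b := ge_of_tendsto hbl (Filter.Eventually.of_forall hbnn)
  set pn : ℕ → PUnit ⊕ PUnit → ℝ :=
    fun n => dsum (fun _ => an n) (fun _ => bn n) with hpn
  set qn : ℕ → PUnit → ℝ := fun n => (fun _ => ∑ k, pn n k) with hqn
  set p : PUnit ⊕ PUnit → ℝ := dsum (fun _ => a) (fun _ => b) with hp
  have h := hcont pn qn (fun _ => (fun _ => PUnit.unit)) p (fun _ => ∑ k, p k)
    (fun _ => PUnit.unit)
    (fun n => meas_pair (hann n) (hbnn n)) (fun n => meas_sumMass (meas_pair (hann n) (hbnn n)))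
    (fun n => mp_toUnit (pn n)) (meas_pair ha hb) (meas_sumMass (meas_pair ha hb))
    (mp_toUnit p) (Filter.Eventually.of_forall (fun _ => rfl))
    (by
      rintro (i | i)
      · exact hal
      · exact hbl)
    (by
      intro j
      have hsum : ∀ n, (∑ k, pn n k) = an n + bn n := by
        intro n; simp [hpn, dsum, Fintype.sum_sum_type]
      have hsump : (∑ k, p k) = a + b := by
        simp [hp, dsum, Fintype.sum_sum_type]
      have := hal.add hbl
      rw [← hsump] at this
      apply this.congr
      intro n
      show an n + bn n = qn n j
      rw [hqn]
      exact (hsum n).symm)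
  exact h

end Fmach3


noncomputable def Phi {X : Type} [Fintype X] (p : X → ℝ) : ℝ :=
  (∑ i, p i) * Real.log (∑ i, p i) - ∑ i, p i * Real.log (p i)

lemma shannonExt_eq_Phi {X : Type} [Fintype X] (p : X → ℝ) (hp : IsMeas p) :
    shannonExt p = Phi p := by
  unfold shannonExt Phi shannon
  by_cases h : (∑ i, p i) = 0
  · rw [if_pos h, h]
    have hz : ∀ i, p i = 0 := by
      intro i
      have := (Finset.sum_eq_zero_iff_of_nonneg (fun i _ => hp i)).1 h i (Finset.mem_univ i)
      exact this
    simp [hz]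
  · rw [if_neg h]
    rw [mul_neg, Finset.mul_sum]
    have : ∀ i, (∑ i, p i) * (p i / (∑ j, p j) * Real.log (p i / (∑ j, p j)))
        = p i * Real.log (p i) - p i * Real.log (∑ j, p j) := by
      intro i
      by_cases hpi : p i = 0
      · simp [hpi]
      · rw [Real.log_div hpi h]
        field_simp
    rw [Finset.sum_congr rfl (fun i _ => this i), Finset.sum_sub_distrib, ← Finset.sum_mul]
    ring

lemma Phi_equiv {X Y : Type} [Fintype X] [Fintype Y] (p : X → ℝ) (q : Y → ℝ) (e : X ≃ Y)
    (h : ∀ j, q j = p (e.symm j)) : Phi q = Phi p := by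
  unfold Phi
  have h1 : (∑ j, q j) = ∑ i, p i := by
    rw [Finset.sum_congr rfl (fun j _ => h j)]
    exact Equiv.sum_comp e.symm p
  have h2 : (∑ j, q j * Real.log (q j)) = ∑ i, p i * Real.log (p i) := by
    rw [Finset.sum_congr rfl (fun j _ => by rw [h j])]
    exact Equiv.sum_comp e.symm (fun i => p i * Real.log (p i))
  rw [h1, h2]

def finSplit (n : ℕ) : (PUnit ⊕ Fin n) ≃ Fin (n + 1) where
  toFun := Sum.elim (fun _ => 0) Fin.succ
  invFun := fun j => Fin.cases (Sum.inl PUnit.unit) (fun i => Sum.inr i) j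
  left_inv := by
    rintro (x | i)
    · cases x; simp
    · simp
  right_inv := by
    intro j
    induction j using Fin.cases
    · simp
    · simp

lemma mp_finSplit {n : ℕ} (p : Fin (n + 1) → ℝ) :
    IsMP (dsum (fun _ : PUnit => p 0) (fun i : Fin n => p i.succ)) p ⇑(finSplit n) := by
  apply mp_of_equiv_val
  intro j
  induction j using Fin.cases
  · rfl
  · rfl

section Fmach4

variable (F : ∀ {X Y : Type} [Fintype X] [Fintype Y], (X → ℝ) → (Y → ℝ) → (X → Y) → ℝ)
variable
    (hnn : ∀ {X Y : Type} [Fintype X] [Fintype Y] (p : X → ℝ) (q : Y → ℝ) (f : X → Y),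
      IsMeas p → IsMeas q → IsMP p q f → 0 ≤ F p q f)
    (hfunc : ∀ {X Y Z : Type} [Fintype X] [Fintype Y] [Fintype Z]
      (p : X → ℝ) (q : Y → ℝ) (r : Z → ℝ) (g : X → Y) (f : Y → Z),
      IsMeas p → IsMeas q → IsMeas r → IsMP p q g → IsMP q r f →
      F p r (f ∘ g) = F q r f + F p q g)
    (hadd : ∀ {X X' Y Y' : Type} [Fintype X] [Fintype X'] [Fintype Y] [Fintype Y']
      (p : X → ℝ) (p' : X' → ℝ) (q : Y → ℝ) (q' : Y' → ℝ) (f : X → X') (g : Y → Y'),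
      IsMeas p → IsMeas p' → IsMeas q → IsMeas q' → IsMP p p' f → IsMP q q' g →
      F (dsum p q) (dsum p' q') (Sum.map f g) = F p p' f + F q q' g)
    (hhom : ∀ {X Y : Type} [Fintype X] [Fintype Y] (p : X → ℝ) (q : Y → ℝ) (f : X → Y)
      (lam : ℝ), 0 ≤ lam → IsMeas p → IsMeas q → IsMP p q f →
      F (fun i => lam * p i) (fun j => lam * q j) f = lam * F p q f)

include hnn hfunc hadd hhom in
lemma G_fin (c : ℝ) (hu : ∀ a b : ℝ, 0 ≤ a → 0 ≤ b → uF F a b = c * dL a b) :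
    ∀ (n : ℕ) (p : Fin n → ℝ), IsMeas p → GG F p = c * Phi p := by
  intro n
  induction n with
  | zero =>
    intro p _
    rw [G_empty F hhom p]
    have h : Phi p = 0 := by unfold Phi; simp
    rw [h, mul_zero]
  | succ n ih =>
    intro p hp
    have htlm : IsMeas (fun i : Fin n => p i.succ) := fun i => hp _
    have hp0 : 0 ≤ p 0 := hp 0
    have hstm : 0 ≤ ∑ i : Fin n, p i.succ := Finset.sum_nonneg fun i _ => htlm i
    have h1 : GG F (dsum (fun _ : PUnit => p 0) (fun i : Fin n => p i.succ)) = GG F p := by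
      refine G_equiv F hnn hfunc _ _ (finSplit n) ?_ (mp_finSplit p)
      rintro (x | i)
      · exact hp0
      · exact htlm i
    have h2 := G_dsum F hfunc hadd (fun _ : PUnit => p 0) (fun i : Fin n => p i.succ)
      (fun _ => hp0) htlm
    have e1 : (fun _ : PUnit => ∑ _i : PUnit, p 0) = (fun _ : PUnit => p 0) := by
      funext _; simp
    rw [e1, G_pt F hfunc (p 0) hp0] at h2
    have h2' : GG F (dsum (fun _ : PUnit => p 0) (fun i : Fin n => p i.succ))
        = GG F (dsum (fun _ : PUnit => p 0) (fun _ : PUnit => ∑ j : Fin n, p j.succ))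
          + 0 + GG F (fun i : Fin n => p i.succ) := h2
    have hx : GG F (dsum (fun _ : PUnit => p 0) (fun _ : PUnit => ∑ j : Fin n, p j.succ))
        = uF F (p 0) (∑ j : Fin n, p j.succ) := rfl
    rw [hx, hu (p 0) _ hp0 hstm, ih _ htlm] at h2'
    rw [← h1, h2']
    have hPhi : Phi p = dL (p 0) (∑ j : Fin n, p j.succ) + Phi (fun i : Fin n => p i.succ) := by
      unfold Phi dL
      rw [Fin.sum_univ_succ p, Fin.sum_univ_succ (fun i : Fin (n + 1) => p i * Real.log (p i))]
      ring_nf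
    rw [hPhi]
    ring

include hnn hfunc hadd hhom in
lemma G_any (c : ℝ) (hu : ∀ a b : ℝ, 0 ≤ a → 0 ≤ b → uF F a b = c * dL a b)
    {X : Type} [Fintype X] (p : X → ℝ) (hp : IsMeas p) : GG F p = c * Phi p := by
  set e := Fintype.equivFin X with he
  set p' : Fin (Fintype.card X) → ℝ := fun j => p (e.symm j) with hp'
  have hmp : IsMP p p' ⇑e := mp_of_equiv_val e (fun j => rfl)
  have h1 : GG F p = GG F p' := G_equiv F hnn hfunc p p' e hp hmp
  have hp'm : IsMeas p' := fun j => hp _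
  rw [h1, G_fin F hnn hfunc hadd hhom c hu _ p' hp'm]
  congr 1
  exact Phi_equiv p p' e (fun j => rfl)

end Fmach4

/-- Characterization of information loss on finite measure spaces
(Baez–Fritz–Leinster, Corollary 3). -/
theorem stmt2
    (F : ∀ {X Y : Type} [Fintype X] [Fintype Y], (X → ℝ) → (Y → ℝ) → (X → Y) → ℝ)
    (hnn : ∀ {X Y : Type} [Fintype X] [Fintype Y] (p : X → ℝ) (q : Y → ℝ) (f : X → Y),
      IsMeas p → IsMeas q → IsMP p q f → 0 ≤ F p q f)
    (hfunc : ∀ {X Y Z : Type} [Fintype X] [Fintype Y] [Fintype Z]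
      (p : X → ℝ) (q : Y → ℝ) (r : Z → ℝ) (g : X → Y) (f : Y → Z),
      IsMeas p → IsMeas q → IsMeas r → IsMP p q g → IsMP q r f →
      F p r (f ∘ g) = F q r f + F p q g)
    (hadd : ∀ {X X' Y Y' : Type} [Fintype X] [Fintype X'] [Fintype Y] [Fintype Y']
      (p : X → ℝ) (p' : X' → ℝ) (q : Y → ℝ) (q' : Y' → ℝ) (f : X → X') (g : Y → Y'),
      IsMeas p → IsMeas p' → IsMeas q → IsMeas q' → IsMP p p' f → IsMP q q' g →
      F (dsum p q) (dsum p' q') (Sum.map f g) = F p p' f + F q q' g)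
    (hhom : ∀ {X Y : Type} [Fintype X] [Fintype Y] (p : X → ℝ) (q : Y → ℝ) (f : X → Y)
      (lam : ℝ), 0 ≤ lam → IsMeas p → IsMeas q → IsMP p q f →
      F (fun i => lam * p i) (fun j => lam * q j) f = lam * F p q f)
    (hcont : ∀ {X Y : Type} [Fintype X] [Fintype Y]
      (pn : ℕ → X → ℝ) (qn : ℕ → Y → ℝ) (fn : ℕ → X → Y)
      (p : X → ℝ) (q : Y → ℝ) (f : X → Y),
      (∀ n, IsMeas (pn n)) → (∀ n, IsMeas (qn n)) → (∀ n, IsMP (pn n) (qn n) (fn n)) →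
      IsMeas p → IsMeas q → IsMP p q f →
      (∀ᶠ n in atTop, fn n = f) →
      (∀ i, Tendsto (fun n => pn n i) atTop (𝓝 (p i))) →
      (∀ j, Tendsto (fun n => qn n j) atTop (𝓝 (q j))) →
      Tendsto (fun n => F (pn n) (qn n) (fn n)) atTop (𝓝 (F p q f))) :
    ∃ c : ℝ, 0 ≤ c ∧ ∀ {X Y : Type} [Fintype X] [Fintype Y]
      (p : X → ℝ) (q : Y → ℝ) (f : X → Y),
      IsMeas p → IsMeas q → IsMP p q f →
      F p q f = c * (shannonExt p - shannonExt q) := by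
  classical
  have hu1 := uF_nonneg F hnn
  have hu2 := uF_zero F hnn hfunc
  have hu3 := uF_sym F hnn hfunc
  have hu4 := uF_hom F hhom
  have hu5 := uF_co F hnn hfunc hadd
  have hu6 := uF_cont F hcont
  have hkey : ∀ a b : ℝ, 0 ≤ a → 0 ≤ b →
      uF F a b = uF F 1 1 / (2 * Real.log 2) * dL a b :=
    key_u (uF F) hu1 hu2 hu3 hu4 hu5 hu6
  have hlog2 : (0:ℝ) < Real.log 2 := Real.log_pos (by norm_num)
  refine ⟨uF F 1 1 / (2 * Real.log 2), ?_, ?_⟩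
  · exact div_nonneg (uF_nonneg F hnn 1 1 zero_le_one zero_le_one) (by positivity)
  · intro X Y _ _ p q f hp hq hf
    have hG : GG F p = GG F q + F p q f := F_sub F hfunc p q f hp hq hf
    have hGp : GG F p = uF F 1 1 / (2 * Real.log 2) * Phi p :=
      G_any F hnn hfunc hadd hhom _ hkey p hp
    have hGq : GG F q = uF F 1 1 / (2 * Real.log 2) * Phi q :=
      G_any F hnn hfunc hadd hhom _ hkey q hq
    rw [shannonExt_eq_Phi p hp, shannonExt_eq_Phi q hq]
    rw [hGp, hGq] at hG
    linarith
end
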